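/- arXiv:1403.1163 — 4 statements merged into one kernel-verified Lean document; each statement's English description precedes it below -/
import Mathlib

section
/- Let K be a compact metric space, (f_n) a bounded sequence in C(K, ℂ), and ε > 0. Assume that every infinite subset of ℕ belongs to D(ℕ, F_ε), i.e., for every infinite L = (l_n) ⊆ ℕ there exists t ∈ K with |f_{l_{2n−1}}(t) − f_{l_{2n}}(t)| ≥ ε for all n. Let δ₁ > 0 and let A be an integer multiple of δ₁ with A > δ₁ and ‖f_n‖_∞ ≤ A for all n. Then there exist an infinite set M ⊆ ℕ and two closed squares Δ₁, Δ₂ ⊆ [−A, A]² (identified with subsets of ℂ) with sides parallel to the axes and of side length δ₁ such that: (1) (Δ₁ × Δ₂) ∩ F_ε ≠ ∅; and (2) for every pair of disjoint subsets J₁, J₂ of M there exists t ∈ K with f_n(t) ∈ Δ_s for all n ∈ J_s and s ∈ {1, 2}. -/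
/-- The closed square in ℂ with lower-left corner `a + b*I` and side length `δ`,
sides parallel to the axes. -/
def closedSquare (a b δ : ℝ) : Set ℂ :=
  {z : ℂ | a ≤ z.re ∧ z.re ≤ a + δ ∧ b ≤ z.im ∧ z.im ≤ b + δ}

namespace SqAux

/-- prepend a finite list to a sequence -/
def app (s : List ℕ) (e : ℕ → ℕ) : ℕ → ℕ := fun n =>
  if h : n < s.length then s.get ⟨n, h⟩ else e (n - s.length)

def seqCons (x : ℕ) (e : ℕ → ℕ) : ℕ → ℕ := fun n => match n with
  | 0 => x
  | n+1 => e n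

def Subseq (B A : ℕ → ℕ) : Prop := ∃ g : ℕ → ℕ, StrictMono g ∧ B = A ∘ g

lemma app_nil (e : ℕ → ℕ) : app [] e = e := by
  funext n; simp [app]

lemma app_eq_of_lt (s : List ℕ) (e : ℕ → ℕ) (n : ℕ) (h : n < s.length) :
    app s e n = s.get ⟨n, h⟩ := by simp [app, h]

lemma app_concat (s : List ℕ) (x : ℕ) (e : ℕ → ℕ) :
    app (s ++ [x]) e = app s (seqCons x e) := by
  funext n
  rcases lt_trichotomy n s.length with h | h | h
  · have h2 : n < (s ++ [x]).length := by simp; omega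
    rw [app_eq_of_lt _ _ _ h2, app_eq_of_lt _ _ _ h]
    exact List.getElem_append_left h
  · subst h
    have h2 : s.length < (s ++ [x]).length := by simp
    rw [app_eq_of_lt _ _ _ h2]
    simp [app, seqCons]
  · have h2 : ¬ n < (s ++ [x]).length := by simp; omega
    have h3 : ¬ n < s.length := by omega
    simp only [app, dif_neg h2, dif_neg h3]
    have : n - s.length = (n - (s ++ [x]).length) + 1 := by simp; omega
    rw [this]; rfl

lemma app_strictMono (s : List ℕ) (e : ℕ → ℕ) (hs : List.Pairwise (· < ·) s)
    (hlt : ∀ x ∈ s, x < e 0) (he : StrictMono e) : StrictMono (app s e) := by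
  apply strictMono_nat_of_lt_succ
  intro n
  rcases lt_trichotomy (n+1) s.length with h | h | h
  · have h1 : n < s.length := by omega
    rw [app_eq_of_lt _ _ _ h1, app_eq_of_lt _ _ _ h]
    exact List.pairwise_iff_get.mp hs ⟨n, h1⟩ ⟨n+1, h⟩ (by simp)
  · have h1 : n < s.length := by omega
    rw [app_eq_of_lt _ _ _ h1]
    have h2 : ¬ (n+1) < s.length := by omega
    simp only [app, dif_neg h2]
    calc s.get ⟨n, h1⟩ < e 0 := hlt _ (s.get_mem _)
    _ ≤ e (n + 1 - s.length) := he.monotone (Nat.zero_le _)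
  · have h1 : ¬ n < s.length := by omega
    have h2 : ¬ (n+1) < s.length := by omega
    simp only [app, dif_neg h1, dif_neg h2]
    apply he; omega

lemma subseq_refl (A : ℕ → ℕ) : Subseq A A := ⟨id, strictMono_id, rfl⟩

lemma subseq_trans {C B A : ℕ → ℕ} (h1 : Subseq C B) (h2 : Subseq B A) : Subseq C A := by
  obtain ⟨g, hg, rfl⟩ := h1
  obtain ⟨g', hg', rfl⟩ := h2
  exact ⟨g' ∘ g, hg'.comp hg, rfl⟩

lemma subseq_range_subset {B A : ℕ → ℕ} (h : Subseq B A) : Set.range B ⊆ Set.range A := by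
  obtain ⟨g, hg, rfl⟩ := h
  rintro x ⟨n, rfl⟩; exact ⟨g n, rfl⟩

lemma subseq_strictMono {B A : ℕ → ℕ} (hA : StrictMono A) (h : Subseq B A) : StrictMono B := by
  obtain ⟨g, hg, rfl⟩ := h; exact hA.comp hg

lemma subseq_of_range_subset {B A : ℕ → ℕ} (hA : StrictMono A) (hB : StrictMono B)
    (h : Set.range B ⊆ Set.range A) : Subseq B A := by
  have : ∀ n, ∃ m, A m = B n := fun n => h ⟨n, rfl⟩
  choose g hg using this
  refine ⟨g, fun a b hab => ?_, by funext n; exact (hg n).symm⟩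
  have : A (g a) < A (g b) := by rw [hg a, hg b]; exact hB hab
  exact hA.lt_iff_lt.mp this

lemma subseq_le {B A : ℕ → ℕ} (hA : StrictMono A) (h : Subseq B A) (n : ℕ) : A n ≤ B n := by
  obtain ⟨g, hg, rfl⟩ := h
  exact hA.monotone (hg.le_apply)

variable (U : Set (ℕ → ℕ))

def accepts (s : List ℕ) (A : ℕ → ℕ) : Prop :=
  ∀ g : ℕ → ℕ, StrictMono g → app s (A ∘ g) ∈ U

def rejects (s : List ℕ) (A : ℕ → ℕ) : Prop :=
  ∀ g : ℕ → ℕ, StrictMono g → ¬ accepts U s (A ∘ g)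

lemma accepts_mono {s : List ℕ} {A B : ℕ → ℕ} (h : accepts U s A) (hBA : Subseq B A) :
    accepts U s B := by
  obtain ⟨g, hg, rfl⟩ := hBA
  intro g' hg'
  exact h (g ∘ g') (hg.comp hg')

lemma rejects_mono {s : List ℕ} {A B : ℕ → ℕ} (h : rejects U s A) (hBA : Subseq B A) :
    rejects U s B := by
  obtain ⟨g, hg, rfl⟩ := hBA
  intro g' hg'
  exact h (g ∘ g') (hg.comp hg')

lemma not_rejects_iff {s : List ℕ} {A : ℕ → ℕ} :
    ¬ rejects U s A ↔ ∃ g : ℕ → ℕ, StrictMono g ∧ accepts U s (A ∘ g) := by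
  unfold rejects; push_neg; simp

lemma reject_step {s : List ℕ} {A : ℕ → ℕ} (hA : StrictMono A) (hrej : rejects U s A) :
    ∃ B, StrictMono B ∧ Subseq B A ∧ ∀ j : ℕ, rejects U (s ++ [B j]) B := by
  by_contra hcon
  push_neg at hcon
  -- the step function
  have step : ∀ C : ℕ → ℕ, StrictMono C → Subseq C A →
      ∃ Cn : (ℕ → ℕ) × ℕ, StrictMono Cn.1 ∧ Subseq Cn.1 C ∧ Cn.2 ∈ Set.range C ∧
        Cn.2 < Cn.1 0 ∧ accepts U (s ++ [Cn.2]) Cn.1 := by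
    intro C hC hCA
    obtain ⟨j, hj⟩ := hcon C hC hCA
    rw [not_rejects_iff] at hj
    obtain ⟨g, hg, hacc⟩ := hj
    refine ⟨⟨fun i => C (g (i + (j+1))), C j⟩, ?_, ?_, ⟨j, rfl⟩, ?_, ?_⟩
    · exact (hC.comp hg).comp (strictMono_id.add_const _)
    · exact ⟨fun i => g (i + (j+1)), hg.comp (strictMono_id.add_const _), rfl⟩
    · calc C j < C (j+1) := hC (by omega)
        _ ≤ C (g (j + 1)) := hC.monotone hg.le_apply
        _ = C (g (0 + (j+1))) := by norm_num
    · exact accepts_mono U hacc ⟨fun i => i + (j+1), strictMono_id.add_const _, rfl⟩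
  -- iterate
  set T := {C : ℕ → ℕ // StrictMono C ∧ Subseq C A} with hT
  have step' : ∀ q : T, ∃ q' : T × ℕ, Subseq q'.1.1 q.1 ∧ q'.2 ∈ Set.range q.1 ∧
      q'.2 < q'.1.1 0 ∧ accepts U (s ++ [q'.2]) q'.1.1 := by
    rintro ⟨C, hC, hCA⟩
    obtain ⟨Cn, h1, h2, h3, h4, h5⟩ := step C hC hCA
    exact ⟨⟨⟨Cn.1, h1, subseq_trans h2 hCA⟩, Cn.2⟩, h2, h3, h4, h5⟩
  choose next hsub hmem hlt hacc using step'
  set F : ℕ → T := fun k => Nat.rec (⟨A, hA, subseq_refl A⟩ : T) (fun _ q => (next q).1) k with hF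
  have hFsucc : ∀ k, F (k + 1) = (next (F k)).1 := fun k => rfl
  set ns : ℕ → ℕ := fun k => (next (F k)).2 with hns
  -- range monotonicity
  have hchain : ∀ k j, k ≤ j → Set.range (F j).1 ⊆ Set.range (F k).1 := by
    intro k j hkj
    induction j with
    | zero => have : k = 0 := by omega
              subst this; exact fun x h => h
    | succ j ih =>
      rcases Nat.eq_or_lt_of_le hkj with h | h
      · subst h; exact fun x h => h
      · exact (subseq_range_subset (hsub (F j))).trans (ih (by omega))
  have hnsmem : ∀ k j, k ≤ j → ns j ∈ Set.range (F k).1 := by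
    intro k j hkj
    exact hchain k j hkj (hmem (F j))
  -- ns is strictly monotone
  have hnslt : ∀ k, ns k < ns (k+1) := by
    intro k
    obtain ⟨m, hm⟩ := hnsmem (k+1) (k+1) le_rfl
    calc ns k < (F (k+1)).1 0 := hlt (F k)
      _ ≤ (F (k+1)).1 m := ((F (k+1)).2.1).monotone (Nat.zero_le _)
      _ = ns (k+1) := hm
  have hnsmono : StrictMono ns := strictMono_nat_of_lt_succ hnslt
  -- ns is a subsequence of A
  have hnssub : Subseq ns A := by
    apply subseq_of_range_subset hA hnsmono
    rintro x ⟨k, rfl⟩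
    exact subseq_range_subset (F k).2.2 (hnsmem k k le_rfl)
  -- ns accepts s
  have haccns : accepts U s ns := by
    intro h hh
    set k := h 0 with hk
    set Tl : ℕ → ℕ := fun i => ns (h (i + 1)) with hTl
    have hTlmono : StrictMono Tl := hnsmono.comp (hh.comp (strictMono_id.add_const _))
    have hTlsub : Subseq Tl (F (k+1)).1 := by
      apply subseq_of_range_subset (F (k+1)).2.1 hTlmono
      rintro x ⟨i, rfl⟩
      refine hnsmem (k+1) (h (i+1)) ?_
      have : h 0 < h (i+1) := hh (by omega)
      omega
    obtain ⟨g', hg', hTleq⟩ := hTlsub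
    have hmem2 : app (s ++ [ns k]) Tl ∈ U := by
      rw [hTleq]
      exact hacc (F k) g' hg'
    rw [app_concat] at hmem2
    have heq : seqCons (ns k) Tl = ns ∘ h := by
      funext i
      cases i with
      | zero => rfl
      | succ i => rfl
    rwa [heq] at hmem2
  obtain ⟨g, hg, hgeq⟩ := hnssub
  exact hrej g hg (hgeq ▸ haccns)


lemma reject_step_family (S : List (List ℕ)) {A : ℕ → ℕ} (hA : StrictMono A)
    (h : ∀ s ∈ S, rejects U s A) :
    ∃ B, StrictMono B ∧ Subseq B A ∧
      ∀ s ∈ S, rejects U s B ∧ ∀ j, rejects U (s ++ [B j]) B := by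
  induction S generalizing A with
  | nil => exact ⟨A, hA, subseq_refl A, by simp⟩
  | cons s S ih =>
    obtain ⟨B₁, hB₁, hB₁A, hB₁rej⟩ := reject_step U hA (h s (by simp))
    obtain ⟨B, hB, hBB₁, hBrest⟩ := ih hB₁ (fun s' hs' =>
      rejects_mono U (h s' (by simp [hs'])) hB₁A)
    refine ⟨B, hB, subseq_trans hBB₁ hB₁A, ?_⟩
    intro s' hs'
    rcases List.mem_cons.mp hs' with rfl | hs'
    · constructor
      · exact rejects_mono U (rejects_mono U (h s' (by simp)) hB₁A) hBB₁
      · intro j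
        obtain ⟨j', hj'⟩ := subseq_range_subset hBB₁ ⟨j, rfl⟩
        have := hB₁rej j'
        rw [hj'] at this
        exact rejects_mono U this hBB₁
    · exact hBrest s' hs'

lemma strictMono_map_range_sublist {g : ℕ → ℕ} (hg : StrictMono g) (m K : ℕ)
    (h : ∀ i < m, g i < K) : ((List.range m).map g).Sublist (List.range K) := by
  induction m generalizing K with
  | zero => simp
  | succ m ih =>
    rw [List.range_succ, List.map_append]
    have h1 : ((List.range m).map g).Sublist (List.range (g m)) :=
      ih (g m) (fun i hi => hg (by omega))
    have h2 : ((List.range m).map g ++ [g m]).Sublist (List.range (g m) ++ [g m]) :=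
      h1.append (List.Sublist.refl _)
    have h3 : List.range (g m) ++ [g m] = List.range (g m + 1) := List.range_succ.symm
    rw [h3] at h2
    exact h2.trans (List.range_sublist.mpr (h m (by omega)))

lemma fusion {A : ℕ → ℕ} (hA : StrictMono A) (hrej : rejects U [] A) :
    ∃ C, StrictMono C ∧ Subseq C A ∧
      ∀ (m : ℕ) (g : ℕ → ℕ), StrictMono g → ∃ A' : ℕ → ℕ, StrictMono A' ∧
        (∀ i < m, C (g i) < A' 0) ∧ rejects U ((List.range m).map (C ∘ g)) A' := by
  classical
  set St := {p : List ℕ × (ℕ → ℕ) // StrictMono p.2 ∧ List.Pairwise (· < ·) p.1 ∧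
    (∀ x ∈ p.1, x < p.2 0) ∧ (∀ s, s.Sublist p.1 → rejects U s p.2)} with hSt
  have step : ∀ q : St, ∃ q' : St,
      (∃ x, q'.1.1 = q.1.1 ++ [x] ∧ x ∈ Set.range q.1.2) ∧ Subseq q'.1.2 q.1.2 := by
    rintro ⟨⟨cs, Ak⟩, hAk, hsort, hbnd, hrejs⟩
    obtain ⟨B, hB, hBA, hBprop⟩ := reject_step_family U cs.sublists hAk
      (fun s hs => hrejs s (List.mem_sublists.mp hs))
    have hA0B : Ak 0 ≤ B 0 := subseq_le hAk hBA 0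
    refine ⟨⟨⟨cs ++ [B 0], fun i => B (i + 1)⟩, ?_, ?_, ?_, ?_⟩,
      ⟨⟨B 0, rfl, subseq_range_subset hBA ⟨0, rfl⟩⟩,
        subseq_trans ⟨fun i => i + 1, strictMono_id.add_const _, rfl⟩ hBA⟩⟩
    · exact hB.comp (strictMono_id.add_const _)
    · rw [List.pairwise_append]
      refine ⟨hsort, by simp, ?_⟩
      intro a ha b hb
      simp only [List.mem_singleton] at hb
      subst hb
      exact lt_of_lt_of_le (hbnd a ha) hA0B
    · intro x hx
      simp only [List.mem_append, List.mem_singleton] at hx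
      have hB01 : B 0 < B 1 := hB (by omega)
      rcases hx with hx | rfl
      · exact lt_of_lt_of_le (hbnd x hx) (le_trans hA0B hB01.le)
      · exact hB01
    · intro s hs
      rw [List.sublist_append_iff] at hs
      obtain ⟨s₁, s₂, rfl, hs₁, hs₂⟩ := hs
      have hsub : Subseq (fun i => B (i + 1)) B := ⟨fun i => i + 1, strictMono_id.add_const _, rfl⟩
      rcases List.sublist_singleton.mp hs₂ with rfl | rfl
      · rw [List.append_nil]
        exact rejects_mono U (hBprop s₁ (List.mem_sublists.mpr hs₁)).1 hsub
      · exact rejects_mono U ((hBprop s₁ (List.mem_sublists.mpr hs₁)).2 0) hsub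
  choose next hnext1 hnext2 using step
  have hq0 : StrictMono (([], A) : List ℕ × (ℕ → ℕ)).2 ∧
      List.Pairwise (· < ·) (([], A) : List ℕ × (ℕ → ℕ)).1 ∧
      (∀ x ∈ (([], A) : List ℕ × (ℕ → ℕ)).1, x < A 0) ∧
      (∀ s, s.Sublist (([], A) : List ℕ × (ℕ → ℕ)).1 → rejects U s A) := by
    refine ⟨hA, by simp, by simp, ?_⟩
    intro s hs
    rw [List.sublist_nil] at hs
    subst hs; exact hrej
  set F : ℕ → St := fun k => Nat.rec (⟨([], A), hq0⟩ : St) (fun _ q => next q) k with hF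
  have hFsucc : ∀ k, F (k + 1) = next (F k) := fun k => rfl
  set C : ℕ → ℕ := fun k => (hnext1 (F k)).choose with hC
  have hCspec : ∀ k, (F (k+1)).1.1 = (F k).1.1 ++ [C k] ∧ C k ∈ Set.range (F k).1.2 :=
    fun k => (hnext1 (F k)).choose_spec
  have hcs : ∀ k, (F k).1.1 = (List.range k).map C := by
    intro k
    induction k with
    | zero => rfl
    | succ k ih => rw [(hCspec k).1, ih, List.range_succ, List.map_append]; rfl
  -- subsequence chain for the A-parts
  have hsubA : ∀ k, Subseq (F k).1.2 A := by
    intro k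
    induction k with
    | zero => exact subseq_refl A
    | succ k ih => exact subseq_trans (hnext2 (F k)) ih
  -- C is strictly monotone
  have hbndC : ∀ k x, x ∈ (F k).1.1 → x < (F k).1.2 0 := fun k => (F k).2.2.2.1
  have hCmem : ∀ k, C k ∈ (F (k+1)).1.1 := by
    intro k; rw [(hCspec k).1]; simp
  have hCmono : StrictMono C := by
    apply strictMono_nat_of_lt_succ
    intro k
    have h1 : C k < (F (k+1)).1.2 0 := hbndC (k+1) _ (hCmem k)
    obtain ⟨i, hi⟩ := (hCspec (k+1)).2
    calc C k < (F (k+1)).1.2 0 := h1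
      _ ≤ (F (k+1)).1.2 i := ((F (k+1)).2.1).monotone (Nat.zero_le _)
      _ = C (k+1) := hi
  refine ⟨C, hCmono, ?_, ?_⟩
  · apply subseq_of_range_subset hA hCmono
    rintro x ⟨k, rfl⟩
    exact subseq_range_subset (hsubA k) (hCspec k).2
  · intro m g hg
    set K := g m + 1 with hK
    refine ⟨(F K).1.2, (F K).2.1, ?_, ?_⟩
    · intro i hi
      apply hbndC K
      rw [hcs K]
      exact List.mem_map.mpr ⟨g i, List.mem_range.mpr (by have h2 : g i < g m := hg hi; omega), rfl⟩
    · apply (F K).2.2.2.2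
      rw [hcs K]
      have : (List.range m).map (C ∘ g) = ((List.range m).map g).map C := by
        rw [List.map_map]
      rw [this]
      apply List.Sublist.map
      exact strictMono_map_range_sublist hg m K (fun i hi => by
        have : g i < g m := hg hi; omega)

theorem gp_main (hU : ∀ e : ℕ → ℕ, StrictMono e → e ∈ U →
      ∃ m, ∀ e' : ℕ → ℕ, StrictMono e' → (∀ i < m, e' i = e i) → e' ∈ U)
    {A : ℕ → ℕ} (hA : StrictMono A) :
    ∃ B, StrictMono B ∧ Subseq B A ∧
      ((∀ g, StrictMono g → (B ∘ g) ∈ U) ∨ (∀ g, StrictMono g → (B ∘ g) ∉ U)) := by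
  classical
  by_cases hc : ∃ g, StrictMono g ∧ accepts U [] (A ∘ g)
  · obtain ⟨g, hg, hacc⟩ := hc
    refine ⟨A ∘ g, hA.comp hg, ⟨g, hg, rfl⟩, Or.inl ?_⟩
    intro g' hg'
    have := hacc g' hg'
    rwa [app_nil] at this
  · have hrej : rejects U [] A := by
      intro g hg hacc
      exact hc ⟨g, hg, hacc⟩
    obtain ⟨C, hCmono, hCA, hfus⟩ := fusion U hA hrej
    refine ⟨C, hCmono, hCA, Or.inr ?_⟩
    intro g hg hmem
    obtain ⟨m, hm⟩ := hU (C ∘ g) (hCmono.comp hg) hmem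
    obtain ⟨A', hA', hlt, hrejs⟩ := hfus m g hg
    set s := (List.range m).map (C ∘ g) with hs
    have hslen : s.length = m := by simp [hs]
    have hsort : List.Pairwise (· < ·) s := by
      rw [hs, List.pairwise_map]
      exact (List.pairwise_lt_range (n := m)).imp (fun h => (hCmono.comp hg) h)
    have haccs : accepts U s A' := by
      intro h hh
      apply hm
      · apply app_strictMono _ _ hsort _ (hA'.comp hh)
        intro x hx
        rw [hs] at hx
        obtain ⟨i, hi, rfl⟩ := List.mem_map.mp hx
        rw [List.mem_range] at hi
        calc (C ∘ g) i < A' 0 := hlt i hi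
          _ ≤ A' (h 0) := hA'.monotone (Nat.zero_le _)
      · intro i hi
        rw [app_eq_of_lt _ _ _ (by omega : i < s.length)]
        simp [hs]
    have := hrejs id strictMono_id
    rw [Function.comp_id] at this
    exact this haccs

section Parity

open Classical in
noncomputable def ppos (req : ℕ → Prop) : ℕ → ℕ
  | 0 => if req 0 then 0 else 1
  | i+1 => if (req (i+1) ↔ Even (ppos req i + 1)) then ppos req i + 1 else ppos req i + 2

variable (req : ℕ → Prop)

lemma ppos_even : ∀ i, Even (ppos req i) ↔ req i := by
  intro i
  induction i with
  | zero =>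
    by_cases h : req 0 <;> simp [ppos, h]
  | succ i ih =>
    rw [ppos]
    by_cases h : req (i+1) ↔ Even (ppos req i + 1)
    · rw [if_pos h]; exact h.symm
    · rw [if_neg h]
      have h2 : Even (ppos req i + 2) ↔ Even (ppos req i) := by
        simp [Nat.even_add]
      rw [h2]
      rw [Nat.even_add_one] at h
      tauto

lemma ppos_lt_succ (i : ℕ) : ppos req i < ppos req (i+1) := by
  rw [ppos]
  split <;> omega

lemma ppos_le_two (i : ℕ) : ppos req (i+1) ≤ ppos req i + 2 := by
  rw [ppos]
  split <;> omega

lemma ppos_mono : StrictMono (ppos req) := strictMono_nat_of_lt_succ (ppos_lt_succ req)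

lemma ppos_zero_le : ppos req 0 ≤ 1 := by
  rw [ppos]; split <;> omega

lemma ppos_ge (i : ℕ) : i ≤ ppos req i := (ppos_mono req).le_apply

lemma ppos_ex (n : ℕ) : ∃ i, n ≤ ppos req i := ⟨n, ppos_ge req n⟩

noncomputable def pseq : ℕ → ℕ := fun n =>
  if ppos req (Nat.find (ppos_ex req n)) = n then 2*(Nat.find (ppos_ex req n))+1
  else 2*(Nat.find (ppos_ex req n))

lemma pseq_find_le (n : ℕ) : ppos req (Nat.find (ppos_ex req n)) ≤ n + 1 := by
  rcases hfe : Nat.find (ppos_ex req n) with _ | j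
  · have := ppos_zero_le req
    omega
  · have hmin := Nat.find_min (ppos_ex req n) (m := j) (hfe ▸ Nat.lt_succ_self j)
    push_neg at hmin
    have := ppos_le_two req j
    omega

lemma pseq_strictMono : StrictMono (pseq req) := by
  apply strictMono_nat_of_lt_succ
  intro n
  set i := Nat.find (ppos_ex req n) with hi
  have hni : n ≤ ppos req i := Nat.find_spec (ppos_ex req n)
  have hni2 : ppos req i ≤ n + 1 := pseq_find_le req n
  by_cases hcase : ppos req i = n
  · have hfind : Nat.find (ppos_ex req (n+1)) = i + 1 := by
      rw [Nat.find_eq_iff]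
      constructor
      · have := ppos_lt_succ req i; omega
      · intro j hj
        push_neg
        have : ppos req j ≤ ppos req i := (ppos_mono req).monotone (by omega)
        omega
    show pseq req n < pseq req (n+1)
    unfold pseq
    rw [← hi, hfind, if_pos hcase]
    split <;> omega
  · have hpi : ppos req i = n + 1 := by omega
    have hfind : Nat.find (ppos_ex req (n+1)) = i := by
      rw [Nat.find_eq_iff]
      constructor
      · omega
      · intro j hj
        push_neg
        have hmin := Nat.find_min (ppos_ex req n) (m := j) (by omega)
        push_neg at hmin
        omega
    show pseq req n < pseq req (n+1)
    unfold pseq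
    rw [← hi, hfind, if_neg hcase, if_pos hpi]
    omega

lemma pseq_ppos (i : ℕ) : pseq req (ppos req i) = 2*i+1 := by
  have hfind : Nat.find (ppos_ex req (ppos req i)) = i := by
    rw [Nat.find_eq_iff]
    exact ⟨le_rfl, fun j hj => by push_neg; exact ppos_mono req hj⟩
  unfold pseq
  rw [hfind, if_pos rfl]

lemma parity_seq : ∃ g : ℕ → ℕ, StrictMono g ∧
    ∀ i, (req i → ∃ n, g (2*n) = 2*i+1) ∧ (¬ req i → ∃ n, g (2*n+1) = 2*i+1) := by
  refine ⟨pseq req, pseq_strictMono req, fun i => ⟨fun h => ?_, fun h => ?_⟩⟩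
  · have he : Even (ppos req i) := (ppos_even req i).mpr h
    obtain ⟨n, hn⟩ := he
    refine ⟨n, ?_⟩
    have : 2 * n = ppos req i := by omega
    rw [this, pseq_ppos]
  · have ho : Odd (ppos req i) := Nat.not_even_iff_odd.mp (fun he => h ((ppos_even req i).mp he))
    obtain ⟨n, hn⟩ := ho
    refine ⟨n, ?_⟩
    have : 2 * n + 1 = ppos req i := by omega
    rw [this, pseq_ppos]

end Parity

lemma isClosed_closedSquare (a b δ : ℝ) : IsClosed (closedSquare a b δ) := by
  have : closedSquare a b δ = {z : ℂ | a ≤ z.re} ∩ ({z : ℂ | z.re ≤ a + δ} ∩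
      ({z : ℂ | b ≤ z.im} ∩ {z : ℂ | z.im ≤ b + δ})) := by
    ext z; simp [closedSquare, Set.mem_setOf_eq, and_assoc]
  rw [this]
  exact (isClosed_le continuous_const Complex.continuous_re).inter
    ((isClosed_le Complex.continuous_re continuous_const).inter
      ((isClosed_le continuous_const Complex.continuous_im).inter
        (isClosed_le Complex.continuous_im continuous_const)))

lemma grid_mem {δ₁ A : ℝ} (hδ : 0 < δ₁) {k : ℕ} (hkpos : 0 < k) (hk : A = k * δ₁)
    (x : ℝ) (h1 : -A ≤ x) (h2 : x ≤ A) :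
    ∃ i : ℕ, i < 2*k ∧ -A + i*δ₁ ≤ x ∧ x ≤ -A + i*δ₁ + δ₁ := by
  set r := x + A with hr
  have hr0 : 0 ≤ r := by simp only [hr]; linarith
  have hA' : A = (k:ℝ) * δ₁ := hk
  have hr2 : r ≤ 2*(k:ℝ)*δ₁ := by simp only [hr]; nlinarith
  set j := Nat.floor (r / δ₁) with hj
  by_cases hcase : j < 2*k
  · refine ⟨j, hcase, ?_, ?_⟩
    · have hle : (j:ℝ) ≤ r / δ₁ := Nat.floor_le (by positivity)
      have : (j:ℝ) * δ₁ ≤ r := by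
        rw [← le_div_iff₀ hδ]; exact hle
      simp only [hr] at this; linarith
    · have hlt : r / δ₁ < (j:ℝ) + 1 := Nat.lt_floor_add_one _
      have : r < ((j:ℝ) + 1) * δ₁ := by
        rw [← div_lt_iff₀ hδ]; exact hlt
      simp only [hr] at this; nlinarith
  · push_neg at hcase
    have hle : ((2*k : ℕ):ℝ) ≤ r / δ₁ := by
      rw [← Nat.le_floor_iff (by positivity)]
      exact hcase
    have h2k : (2*(k:ℝ)) * δ₁ ≤ r := by
      rw [← le_div_iff₀ hδ]; push_cast at hle ⊢; linarith
    have hreq : r = 2*(k:ℝ)*δ₁ := le_antisymm hr2 h2k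
    refine ⟨2*k - 1, by omega, ?_, ?_⟩
    · have hcast : ((2*k - 1 : ℕ):ℝ) = 2*(k:ℝ) - 1 := by
        push_cast [Nat.cast_sub (by omega : 1 ≤ 2*k)]; ring
      rw [hcast]
      simp only [hr] at hreq
      nlinarith
    · have hcast : ((2*k - 1 : ℕ):ℝ) = 2*(k:ℝ) - 1 := by
        push_cast [Nat.cast_sub (by omega : 1 ≤ 2*k)]; ring
      rw [hcast]
      simp only [hr] at hreq
      nlinarith

lemma dset_closed_approx {K : Type*} [MetricSpace K] [CompactSpace K] [Nonempty K]
    (f : ℕ → C(K, ℂ)) (S₁ S₂ : Set ℂ) (h₁ : IsClosed S₁) (h₂ : IsClosed S₂)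
    (e : ℕ → ℕ)
    (happ : ∀ m : ℕ, ∃ e' : ℕ → ℕ, (∀ i < m, e' i = e i) ∧
      ∃ t : K, ∀ n, f (e' (2*n)) t ∈ S₁ ∧ f (e' (2*n+1)) t ∈ S₂) :
    ∃ t : K, ∀ n, f (e (2*n)) t ∈ S₁ ∧ f (e (2*n+1)) t ∈ S₂ := by
  set T : ℕ → Set K := fun j => {t | ∀ i ≤ j, f (e (2*i)) t ∈ S₁ ∧ f (e (2*i+1)) t ∈ S₂}
    with hT
  have hTclosed : ∀ j, IsClosed (T j) := by
    intro j
    have : T j = ⋂ i, ⋂ (_ : i ≤ j),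
        ((f (e (2*i)))⁻¹' S₁ ∩ (f (e (2*i+1)))⁻¹' S₂) := by
      ext t
      simp only [hT, Set.mem_setOf_eq, Set.mem_iInter, Set.mem_inter_iff, Set.mem_preimage]
    rw [this]
    exact isClosed_iInter fun i => isClosed_iInter fun _ =>
      ((h₁.preimage (f _).continuous).inter (h₂.preimage (f _).continuous))
  have hTne : ∀ j, (T j).Nonempty := by
    intro j
    obtain ⟨e', he', t, ht⟩ := happ (2*j+2)
    refine ⟨t, fun i hij => ?_⟩
    have h1 := ht i
    rw [he' (2*i) (by omega), he' (2*i+1) (by omega)] at h1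
    exact h1
  have hTanti : ∀ a b : ℕ, a ≤ b → T b ⊆ T a := by
    intro a b hab t ht i hia
    exact ht i (le_trans hia hab)
  have hdir : Directed (· ⊇ ·) T := fun a b =>
    ⟨max a b, hTanti a _ (le_max_left a b), hTanti b _ (le_max_right a b)⟩
  obtain ⟨t, ht⟩ := IsCompact.nonempty_iInter_of_directed_nonempty_isCompact_isClosed T hdir hTne
    (fun j => (hTclosed j).isCompact) hTclosed
  refine ⟨t, fun n => ?_⟩
  exact (Set.mem_iInter.mp ht n) n le_rfl

end SqAux


open SqAux in
/-- Lemma 3: if every infinite subset of ℕ lies in D(ℕ, F_ε), then for every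
δ₁ > 0 and every integer multiple A of δ₁ with A > δ₁ bounding all ‖f_n‖, there
are an infinite M ⊆ ℕ and squares Δ₁, Δ₂ ⊆ [−A, A]² of side δ₁ with
(Δ₁ × Δ₂) ∩ F_ε ≠ ∅ and such that for all disjoint J₁, J₂ ⊆ M some t ∈ K has
f_n(t) ∈ Δ_s for all n ∈ J_s, s = 1, 2. -/
theorem squares_lemma (K : Type*) [MetricSpace K] [CompactSpace K]
    (f : ℕ → C(K, ℂ)) (ε : ℝ) (hε : 0 < ε)
    (hD : ∀ l : ℕ → ℕ, StrictMono l →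
      ∃ t : K, ∀ n : ℕ, ε ≤ ‖f (l (2 * n)) t - f (l (2 * n + 1)) t‖)
    (δ₁ A : ℝ) (hδ₁ : 0 < δ₁) (hmult : ∃ k : ℕ, A = k * δ₁) (hA : δ₁ < A)
    (hbound : ∀ n, ‖f n‖ ≤ A) :
    ∃ M : Set ℕ, M.Infinite ∧ ∃ a₁ b₁ a₂ b₂ : ℝ,
      (-A ≤ a₁ ∧ a₁ + δ₁ ≤ A ∧ -A ≤ b₁ ∧ b₁ + δ₁ ≤ A) ∧
      (-A ≤ a₂ ∧ a₂ + δ₁ ≤ A ∧ -A ≤ b₂ ∧ b₂ + δ₁ ≤ A) ∧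
      (∃ z₁ ∈ closedSquare a₁ b₁ δ₁, ∃ z₂ ∈ closedSquare a₂ b₂ δ₁, ε ≤ ‖z₁ - z₂‖) ∧
      ∀ J₁ J₂ : Set ℕ, J₁ ⊆ M → J₂ ⊆ M → Disjoint J₁ J₂ →
        ∃ t : K, (∀ n ∈ J₁, f n t ∈ closedSquare a₁ b₁ δ₁) ∧
          (∀ n ∈ J₂, f n t ∈ closedSquare a₂ b₂ δ₁) := by
  classical
  obtain ⟨k, hk⟩ := hmult
  have hkpos : 0 < k := by
    rcases Nat.eq_zero_or_pos k with rfl | h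
    · exfalso; rw [hk] at hA; push_cast at hA; linarith
    · exact h
  have hKne : Nonempty K := by
    obtain ⟨t0, _⟩ := hD id strictMono_id
    exact ⟨t0⟩
  -- corners and squares
  set cor : Fin (2*k) → ℝ := fun i => -A + i*δ₁ with hcor
  set SQ : Fin (2*k) × Fin (2*k) → Set ℂ := fun q => closedSquare (cor q.1) (cor q.2) δ₁
    with hSQ
  set DS : ((Fin (2*k) × Fin (2*k)) × (Fin (2*k) × Fin (2*k))) → Set (ℕ → ℕ) := fun p =>
    {e | ∃ t : K, ∀ n, f (e (2*n)) t ∈ SQ p.1 ∧ f (e (2*n+1)) t ∈ SQ p.2} with hDS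
  set Good : ((Fin (2*k) × Fin (2*k)) × (Fin (2*k) × Fin (2*k))) → Prop := fun p =>
    ∃ z₁ ∈ SQ p.1, ∃ z₂ ∈ SQ p.2, ε ≤ ‖z₁ - z₂‖ with hGood
  -- every point of norm ≤ A lies in some square
  have hsq : ∀ z : ℂ, ‖z‖ ≤ A → ∃ q : Fin (2*k) × Fin (2*k), z ∈ SQ q := by
    intro z hz
    have hre : |z.re| ≤ A := le_trans (Complex.abs_re_le_norm z) hz
    have him : |z.im| ≤ A := le_trans (Complex.abs_im_le_norm z) hz
    rw [abs_le] at hre him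
    obtain ⟨i, hi, hi1, hi2⟩ := grid_mem hδ₁ hkpos hk z.re hre.1 hre.2
    obtain ⟨j, hj, hj1, hj2⟩ := grid_mem hδ₁ hkpos hk z.im him.1 him.2
    exact ⟨(⟨i, hi⟩, ⟨j, hj⟩), hi1, hi2, hj1, hj2⟩
  -- density: every strictly monotone sequence has a subsequence in some good DS p
  have hdens : ∀ e : ℕ → ℕ, StrictMono e →
      ∃ p, Good p ∧ ∃ g, StrictMono g ∧ (e ∘ g) ∈ DS p := by
    intro e he
    obtain ⟨t, ht⟩ := hD e he
    have hsel : ∀ n : ℕ, ∃ p : (Fin (2*k) × Fin (2*k)) × (Fin (2*k) × Fin (2*k)),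
        f (e (2*n)) t ∈ SQ p.1 ∧ f (e (2*n+1)) t ∈ SQ p.2 := by
      intro n
      obtain ⟨q1, h1⟩ := hsq (f (e (2*n)) t)
        (le_trans ((f (e (2*n))).norm_coe_le_norm t) (hbound _))
      obtain ⟨q2, h2⟩ := hsq (f (e (2*n+1)) t)
        (le_trans ((f (e (2*n+1))).norm_coe_le_norm t) (hbound _))
      exact ⟨(q1, q2), h1, h2⟩
    choose Q hQ1 hQ2 using hsel
    obtain ⟨p, hp⟩ := Finite.exists_infinite_fiber Q
    have hinf : {n | Q n = p}.Infinite := by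
      rw [← Set.infinite_coe_iff] at *
      exact hp
    set h : ℕ → ℕ := Nat.nth (fun n => Q n = p) with hh
    have hhmono : StrictMono h := Nat.nth_strictMono hinf
    have hhmem : ∀ n, Q (h n) = p := fun n => Nat.nth_mem_of_infinite hinf n
    set g : ℕ → ℕ := fun n => 2 * h (n / 2) + n % 2 with hg
    have hgeval : ∀ n, g (2*n) = 2 * h n ∧ g (2*n+1) = 2 * h n + 1 := by
      intro n
      constructor
      · have e1 : (2*n) / 2 = n := by omega
        have e2 : (2*n) % 2 = 0 := by omega
        simp only [hg, e1, e2]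
        omega
      · have e1 : (2*n+1) / 2 = n := by omega
        have e2 : (2*n+1) % 2 = 1 := by omega
        simp only [hg, e1, e2]
    have hgmono : StrictMono g := by
      apply strictMono_nat_of_lt_succ
      intro n
      simp only [hg]
      rcases Nat.even_or_odd n with he' | ho'
      · obtain ⟨m, rfl⟩ := he'
        have e1 : (m+m)/2 = m := by omega
        have e2 : (m+m+1)/2 = m := by omega
        rw [e1, e2]
        omega
      · obtain ⟨m, rfl⟩ := ho'
        have e1 : (2*m+1)/2 = m := by omega
        have e2 : (2*m+1+1)/2 = m+1 := by omega
        rw [e1, e2]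
        have hlt : h m < h (m+1) := hhmono (by omega)
        omega
    refine ⟨p, ?_, g, hgmono, ?_⟩
    · refine ⟨f (e (2 * h 0)) t, ?_, f (e (2 * h 0 + 1)) t, ?_, ?_⟩
      · have := hQ1 (h 0); rwa [hhmem 0] at this
      · have := hQ2 (h 0); rwa [hhmem 0] at this
      · exact ht (h 0)
    · refine ⟨t, fun n => ?_⟩
      constructor
      · show f (e (g (2*n))) t ∈ SQ p.1
        rw [(hgeval n).1]
        have := hQ1 (h n); rwa [hhmem n] at this
      · show f (e (g (2*n+1))) t ∈ SQ p.2
        rw [(hgeval n).2]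
        have := hQ2 (h n); rwa [hhmem n] at this
  -- iterate Galvin–Prikry over a list of pairs of squares
  have hiter : ∀ (l : List ((Fin (2*k) × Fin (2*k)) × (Fin (2*k) × Fin (2*k))))
      (A0 : ℕ → ℕ), StrictMono A0 →
      ∃ B, StrictMono B ∧ Subseq B A0 ∧
        ((∃ p ∈ l, Good p ∧ ∀ g, StrictMono g → (B ∘ g) ∈ DS p) ∨
         (∀ p ∈ l, Good p → ∀ g, StrictMono g → (B ∘ g) ∉ DS p)) := by
    intro l
    induction l with
    | nil =>
      intro A0 hA0
      exact ⟨A0, hA0, subseq_refl _, Or.inr (by simp)⟩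
    | cons p l ih =>
      intro A0 hA0
      by_cases hgood : Good p
      · have hU : ∀ e : ℕ → ℕ, StrictMono e → e ∈ (DS p)ᶜ →
            ∃ m, ∀ e' : ℕ → ℕ, StrictMono e' → (∀ i < m, e' i = e i) → e' ∈ (DS p)ᶜ := by
          intro e he hmem
          by_contra hcon
          push_neg at hcon
          simp only [Set.mem_compl_iff, not_not] at hcon
          apply hmem
          have := dset_closed_approx (K := K) f (SQ p.1) (SQ p.2)
            (isClosed_closedSquare _ _ _) (isClosed_closedSquare _ _ _) e ?_
          · exact this
          · intro m
            obtain ⟨e', he'mono, he'eq, he'mem⟩ := hcon m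
            exact ⟨e', he'eq, he'mem⟩
        obtain ⟨B₁, hB₁, hB₁A, hcase⟩ := gp_main ((DS p)ᶜ) hU hA0
        rcases hcase with hcase | hcase
        · obtain ⟨B, hB, hBB₁, hres⟩ := ih B₁ hB₁
          refine ⟨B, hB, subseq_trans hBB₁ hB₁A, ?_⟩
          rcases hres with ⟨p', hp', hgood', hall⟩ | hnone
          · exact Or.inl ⟨p', List.mem_cons_of_mem _ hp', hgood', hall⟩
          · right
            intro p' hp' hgood'' g hgmono
            rcases List.mem_cons.mp hp' with rfl | hp'
            · obtain ⟨gB, hgB, hBeq⟩ := hBB₁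
              have hcomp : B ∘ g = B₁ ∘ (gB ∘ g) := by rw [hBeq]; rfl
              rw [hcomp]
              exact hcase (gB ∘ g) (hgB.comp hgmono)
            · exact hnone p' hp' hgood'' g hgmono
        · refine ⟨B₁, hB₁, hB₁A, Or.inl ⟨p, List.mem_cons_self, hgood, ?_⟩⟩
          intro g hg
          have := hcase g hg
          rwa [Set.notMem_compl_iff] at this
      · obtain ⟨B, hB, hBA, hres⟩ := ih A0 hA0
        refine ⟨B, hB, hBA, ?_⟩
        rcases hres with ⟨p', hp', hgood', hall⟩ | hnone
        · exact Or.inl ⟨p', List.mem_cons_of_mem _ hp', hgood', hall⟩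
        · right
          intro p' hp' hgood'' g hgmono
          rcases List.mem_cons.mp hp' with rfl | hp'
          · exact absurd hgood'' hgood
          · exact hnone p' hp' hgood'' g hgmono
  obtain ⟨B, hB, -, hres⟩ := hiter (Finset.univ.toList) id strictMono_id
  rcases hres with ⟨p, -, hgood, hall⟩ | hnone
  · -- main case
    refine ⟨Set.range (fun i => B (2*i+1)), ?_, cor p.1.1, cor p.1.2, cor p.2.1, cor p.2.2,
      ?_, ?_, ?_, ?_⟩
    · apply Set.infinite_range_of_injective
      have hmono : StrictMono (fun i => B (2*i+1)) :=
        fun a b hab => hB (by omega : 2*a+1 < 2*b+1)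
      exact hmono.injective
    · -- bounds for first square
      refine ⟨?_, ?_, ?_, ?_⟩ <;>
      · simp only [hcor]
        have h1 : (0:ℝ) ≤ (p.1.1 : ℝ) ∨ True := Or.inr trivial
        have hlt : ((p.1.1 : ℕ) : ℝ) + 1 ≤ 2*(k:ℝ) := by
          have := p.1.1.isLt
          push_cast
          exact_mod_cast Nat.succ_le_of_lt this
        have hlt2 : ((p.1.2 : ℕ) : ℝ) + 1 ≤ 2*(k:ℝ) := by
          have := p.1.2.isLt
          push_cast
          exact_mod_cast Nat.succ_le_of_lt this
        have hge : (0:ℝ) ≤ ((p.1.1 : ℕ) : ℝ) := Nat.cast_nonneg _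
        have hge2 : (0:ℝ) ≤ ((p.1.2 : ℕ) : ℝ) := Nat.cast_nonneg _
        nlinarith [hk]
    · -- bounds for second square
      refine ⟨?_, ?_, ?_, ?_⟩ <;>
      · simp only [hcor]
        have hlt : ((p.2.1 : ℕ) : ℝ) + 1 ≤ 2*(k:ℝ) := by
          have := p.2.1.isLt
          push_cast
          exact_mod_cast Nat.succ_le_of_lt this
        have hlt2 : ((p.2.2 : ℕ) : ℝ) + 1 ≤ 2*(k:ℝ) := by
          have := p.2.2.isLt
          push_cast
          exact_mod_cast Nat.succ_le_of_lt this
        have hge : (0:ℝ) ≤ ((p.2.1 : ℕ) : ℝ) := Nat.cast_nonneg _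
        have hge2 : (0:ℝ) ≤ ((p.2.2 : ℕ) : ℝ) := Nat.cast_nonneg _
        nlinarith [hk]
    · -- separation
      exact hgood
    · -- independence
      intro J₁ J₂ hJ₁ hJ₂ hdisj
      obtain ⟨g, hgmono, hgprop⟩ := parity_seq (fun i => B (2*i+1) ∉ J₂)
      obtain ⟨t, ht⟩ := hall g hgmono
      refine ⟨t, ?_, ?_⟩
      · intro n hn
        obtain ⟨i, hi⟩ := hJ₁ hn
        have hi' : B (2*i+1) = n := hi
        have hreq : B (2*i+1) ∉ J₂ := by
          rw [hi']; exact Set.disjoint_left.mp hdisj hn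
        obtain ⟨n', hn'⟩ := (hgprop i).1 hreq
        have hthis : f (B (g (2*n'))) t ∈ SQ p.1 := (ht n').1
        rw [hn'] at hthis
        rw [← hi']
        exact hthis
      · intro n hn
        obtain ⟨i, hi⟩ := hJ₂ hn
        have hi' : B (2*i+1) = n := hi
        have hreq : ¬ (B (2*i+1) ∉ J₂) := by
          rw [hi']; exact not_not_intro hn
        obtain ⟨n', hn'⟩ := (hgprop i).2 hreq
        have hthis : f (B (g (2*n'+1))) t ∈ SQ p.2 := (ht n').2
        rw [hn'] at hthis
        rw [← hi']
        exact hthis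
  · -- contradiction with density
    exfalso
    obtain ⟨p, hgood, g, hg, hmem⟩ := hdens B hB
    exact hnone p (Finset.mem_toList.mpr (Finset.mem_univ p)) hgood g hg hmem
end

section
/- Let K be a compact metric space, (f_n) a bounded sequence in C(K, ℂ), ε > 0, δ > 0, and 0 < δ₁ < δ/5. Let Δ₁ = [0, δ₁]² and let Δ₂ be a closed square with sides parallel to the axes of side length δ₁ contained in the first quadrant (both identified with subsets of ℂ). Assume: (1) (Δ₁ × Δ₂) ∩ F_ε ≠ ∅; and (2) for every pair of disjoint subsets J₁, J₂ of ℕ there exists t ∈ K with f_n(t) ∈ Δ_s for all n ∈ J_s and s ∈ {1, 2}. Then ‖Σ_{n≥2} λ_n (f_n − f_1)‖_∞ ≥ (ε√2/8 − δ) · Σ_{n≥2} (|Re(λ_n)| + |Im(λ_n)|) for every finitely supported sequence of complex scalars (λ_n)_{n≥2}. -/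
open Complex

/-- A complex number with both coordinates bounded by `d` has norm at most `2d`. -/
lemma aux_norm_le_two_mul {d : ℝ} {z : ℂ} (h1 : |z.re| ≤ d) (h2 : |z.im| ≤ d) :
    ‖z‖ ≤ 2 * d := by
  calc ‖z‖ ≤ |z.re| + |z.im| := Complex.norm_le_abs_re_add_abs_im z
  _ ≤ 2 * d := by linarith

/-- Difference of points in two squares of side `d` is close to the difference of corners. -/
lemma aux_square_diff {a b a' b' d : ℝ} {z₁ z₂ : ℂ}
    (h₁ : z₁ ∈ closedSquare a b d) (h₂ : z₂ ∈ closedSquare a' b' d) :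
    ‖z₁ - z₂ - ((a - a' : ℝ) + (b - b' : ℝ) * Complex.I)‖ ≤ 2 * d := by
  obtain ⟨r1, r2, r3, r4⟩ := h₁
  obtain ⟨s1, s2, s3, s4⟩ := h₂
  apply aux_norm_le_two_mul
  · simp only [Complex.sub_re, Complex.add_re, Complex.ofReal_re, Complex.mul_re,
      Complex.I_re, Complex.I_im, Complex.ofReal_im]
    rw [abs_le]; constructor <;> [nlinarith; nlinarith]
  · simp only [Complex.sub_im, Complex.add_im, Complex.ofReal_im, Complex.mul_im,
      Complex.I_re, Complex.I_im, Complex.ofReal_re]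
    rw [abs_le]; constructor <;> [nlinarith; nlinarith]

/-- Per-term lower bound. -/
lemma aux_per_term (θ lam v w : ℂ) (hθ : ‖θ‖ = 1) (d : ℝ)
    (h : (0 ≤ (θ * lam).re ∧ ‖v - w‖ ≤ d) ∨ ((θ * lam).re < 0 ∧ ‖v‖ ≤ d)) :
    max (θ * lam).re 0 * ‖w‖ ^ 2 - (|lam.re| + |lam.im|) * (d * ‖w‖)
      ≤ (θ * lam * v * (starRingEnd ℂ) w).re := by
  have hlam : ‖lam‖ ≤ |lam.re| + |lam.im| := Complex.norm_le_abs_re_add_abs_im lam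
  rcases h with ⟨hre, he⟩ | ⟨hre, he⟩
  · -- v = w + (v - w)
    have hv : v = w + (v - w) := by ring
    have key : (θ * lam * v * (starRingEnd ℂ) w).re
        = (θ * lam).re * ‖w‖ ^ 2 + (θ * lam * (v - w) * (starRingEnd ℂ) w).re := by
      have h9 : θ * lam * v * (starRingEnd ℂ) w
          = θ * lam * (w * (starRingEnd ℂ) w) + θ * lam * (v - w) * (starRingEnd ℂ) w := by
        ring
      rw [h9, Complex.add_re, Complex.mul_conj]
      congr 1
      simp only [Complex.mul_re, Complex.ofReal_re, Complex.ofReal_im, mul_zero, sub_zero]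
      rw [Complex.normSq_eq_norm_sq]
    rw [key, max_eq_left hre]
    have hbd : |(θ * lam * (v - w) * (starRingEnd ℂ) w).re|
        ≤ (|lam.re| + |lam.im|) * (d * ‖w‖) := by
      calc |(θ * lam * (v - w) * (starRingEnd ℂ) w).re|
          ≤ ‖θ * lam * (v - w) * (starRingEnd ℂ) w‖ := Complex.abs_re_le_norm _
        _ = ‖θ‖ * ‖lam‖ * ‖v - w‖ * ‖w‖ := by
            rw [norm_mul, norm_mul, norm_mul, RCLike.norm_conj]
        _ ≤ 1 * (|lam.re| + |lam.im|) * d * ‖w‖ := by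
            have hd0 : 0 ≤ d := le_trans (norm_nonneg _) he
            gcongr <;> simp [hθ]
        _ = (|lam.re| + |lam.im|) * (d * ‖w‖) := by ring
    have := abs_le.mp hbd
    linarith
  · rw [max_eq_right hre.le]
    have hbd : |(θ * lam * v * (starRingEnd ℂ) w).re|
        ≤ (|lam.re| + |lam.im|) * (d * ‖w‖) := by
      calc |(θ * lam * v * (starRingEnd ℂ) w).re|
          ≤ ‖θ * lam * v * (starRingEnd ℂ) w‖ := Complex.abs_re_le_norm _
        _ = ‖θ‖ * ‖lam‖ * ‖v‖ * ‖w‖ := by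
            rw [norm_mul, norm_mul, norm_mul, RCLike.norm_conj]
        _ ≤ 1 * (|lam.re| + |lam.im|) * d * ‖w‖ := by
            have hd0 : 0 ≤ d := le_trans (norm_nonneg _) he
            gcongr <;> simp [hθ]
        _ = (|lam.re| + |lam.im|) * (d * ‖w‖) := by ring
    have := abs_le.mp hbd
    linarith

set_option maxHeartbeats 1000000 in
/-- Lemma 4: with Δ₁ = [0, δ₁]² and Δ₂ a square of side δ₁ in the first quadrant
such that (Δ₁ × Δ₂) ∩ F_ε ≠ ∅ and such that for all disjoint J₁, J₂ ⊆ ℕ some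
t ∈ K has f_n(t) ∈ Δ_s for n ∈ J_s, one gets
‖Σ_{n≥2} λ_n (f_n − f_1)‖ ≥ (ε√2/8 − δ)·Σ_{n≥2}(|Re λ_n| + |Im λ_n|). -/
theorem lower_l1_estimate (K : Type*) [MetricSpace K] [CompactSpace K]
    (f : ℕ → C(K, ℂ)) (hf : ∃ C : ℝ, ∀ n, ‖f n‖ ≤ C)
    (ε δ δ₁ : ℝ) (hε : 0 < ε) (hδ : 0 < δ) (hδ₁ : 0 < δ₁) (hδ₁δ : δ₁ < δ / 5)
    (a b : ℝ) (ha : 0 ≤ a) (hb : 0 ≤ b)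
    (h1 : ∃ z₁ ∈ closedSquare 0 0 δ₁, ∃ z₂ ∈ closedSquare a b δ₁, ε ≤ ‖z₁ - z₂‖)
    (h2 : ∀ J₁ J₂ : Set ℕ, Disjoint J₁ J₂ →
      ∃ t : K, (∀ n ∈ J₁, f n t ∈ closedSquare 0 0 δ₁) ∧
        (∀ n ∈ J₂, f n t ∈ closedSquare a b δ₁)) :
    ∀ lam : ℕ →₀ ℂ, 0 ∉ lam.support →
      ‖∑ n ∈ lam.support, lam n • (f n - f 0)‖ ≥
        (ε * Real.sqrt 2 / 8 - δ) *
          ∑ n ∈ lam.support, (|(lam n).re| + |(lam n).im|) := by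
  intro lam h0
  set s := lam.support with hs
  set S := ∑ n ∈ s, (|(lam n).re| + |(lam n).im|) with hSdef
  have hS0 : 0 ≤ S := Finset.sum_nonneg fun n _ => by positivity
  have hsqrt2 : Real.sqrt 2 ≤ 2 := by
    nlinarith [Real.sq_sqrt (by norm_num : (0:ℝ) ≤ 2), Real.sqrt_nonneg 2]
  have hsqrt2' : (1 : ℝ) ≤ Real.sqrt 2 := by
    nlinarith [Real.sq_sqrt (by norm_num : (0:ℝ) ≤ 2), Real.sqrt_nonneg 2]
  by_cases hc : ε * Real.sqrt 2 / 8 - δ ≤ 0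
  · calc (ε * Real.sqrt 2 / 8 - δ) * S ≤ 0 := mul_nonpos_of_nonpos_of_nonneg hc hS0
      _ ≤ ‖∑ n ∈ s, lam n • (f n - f 0)‖ := norm_nonneg _
  push_neg at hc
  -- hence ε is large compared to δ₁
  have hεδ₁ : 2 * δ₁ < ε := by nlinarith
  -- the corner difference vector
  set w : ℂ := (a : ℝ) + (b : ℝ) * Complex.I with hw
  obtain ⟨z₁, hz₁, z₂, hz₂, hzε⟩ := h1
  have hwlb : ε - 2 * δ₁ ≤ ‖w‖ := by
    have hd := aux_square_diff hz₂ hz₁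
    have : z₂ - z₁ - ((a - 0 : ℝ) + (b - 0 : ℝ) * Complex.I) = (z₂ - z₁) - w := by
      rw [hw]; push_cast; ring
    rw [this] at hd
    have h5 : ‖z₂ - z₁‖ - ‖(z₂ - z₁) - w‖ ≤ ‖w‖ := by
      have := norm_sub_norm_le (z₂ - z₁) ((z₂ - z₁) - w)
      simpa using this
    have h6 : ‖z₁ - z₂‖ = ‖z₂ - z₁‖ := by rw [← norm_neg]; ring_nf
    linarith
  have hwpos : 0 < ‖w‖ := lt_of_lt_of_le (by linarith) hwlb
  -- the four directional sums
  set T : ℂ → ℝ := fun θ => ∑ n ∈ s, max ((θ * lam n).re) 0 with hT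
  have hTsum : T 1 + T (-1) + T Complex.I + T (-Complex.I) = S := by
    rw [hT, hSdef]
    simp only [← Finset.sum_add_distrib]
    apply Finset.sum_congr rfl
    intro n _
    have e1 : ((1 : ℂ) * lam n).re = (lam n).re := by simp
    have e2 : ((-1 : ℂ) * lam n).re = -(lam n).re := by simp
    have e3 : (Complex.I * lam n).re = -(lam n).im := by simp [Complex.mul_re]
    have e4 : ((-Complex.I) * lam n).re = (lam n).im := by simp [Complex.mul_re]
    rw [e1, e2, e3, e4]
    have hx : ∀ x : ℝ, max x 0 + max (-x) 0 = |x| := by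
      intro x
      rcases le_total x 0 with h | h
      · rw [max_eq_right h, max_eq_left (neg_nonneg.mpr h), _root_.abs_of_nonpos h]; ring
      · rw [max_eq_left h, max_eq_right (neg_nonpos.mpr h), _root_.abs_of_nonneg h]; ring
    linarith [hx ((lam n).re), hx ((lam n).im)]
  -- one of the four is at least S/4
  have hbig : ∃ θ : ℂ, ‖θ‖ = 1 ∧ S / 4 ≤ T θ := by
    by_contra hcon
    push_neg at hcon
    have c1 := hcon 1 (by simp)
    have c2 := hcon (-1) (by simp)
    have c3 := hcon Complex.I (by simp)
    have c4 := hcon (-Complex.I) (by simp)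
    linarith
  obtain ⟨θ, hθ, hTθ⟩ := hbig
  -- the set J
  set J : Set ℕ := {n | n ∈ s ∧ 0 ≤ (θ * lam n).re} with hJ
  obtain ⟨t, ht₁, ht₂⟩ := h2 Jᶜ J disjoint_compl_left
  have h0J : (0 : ℕ) ∈ Jᶜ := by
    intro hmem
    exact h0 hmem.1
  have hf0 : f 0 t ∈ closedSquare 0 0 δ₁ := ht₁ 0 h0J
  -- the difference values
  set v : ℕ → ℂ := fun n => f n t - f 0 t with hv
  -- pointwise estimates
  have hperterm : ∀ n ∈ s,
      max ((θ * lam n).re) 0 * ‖w‖ ^ 2 - (|(lam n).re| + |(lam n).im|) * (2 * δ₁ * ‖w‖)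
        ≤ (θ * lam n * v n * (starRingEnd ℂ) w).re := by
    intro n hn
    apply aux_per_term _ _ _ _ hθ
    by_cases hnJ : n ∈ J
    · left
      refine ⟨hnJ.2, ?_⟩
      have hd := aux_square_diff (ht₂ n hnJ) hf0
      have : f n t - f 0 t - ((a - 0 : ℝ) + (b - 0 : ℝ) * Complex.I) = v n - w := by
        rw [hv, hw]; push_cast; ring
      rwa [this] at hd
    · right
      have hre : (θ * lam n).re < 0 := by
        by_contra hge
        push_neg at hge
        exact hnJ ⟨hn, hge⟩
      refine ⟨hre, ?_⟩
      have hd := aux_square_diff (ht₁ n hnJ) hf0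
      have : f n t - f 0 t - ((0 - 0 : ℝ) + (0 - 0 : ℝ) * Complex.I) = v n := by
        rw [hv]; push_cast; ring
      rwa [this] at hd
  -- the value at t
  set Z : ℂ := ∑ n ∈ s, lam n * v n with hZ
  have hZnorm : ‖Z‖ ≤ ‖∑ n ∈ s, lam n • (f n - f 0)‖ := by
    have heval := ContinuousMap.norm_coe_le_norm (∑ n ∈ s, lam n • (f n - f 0)) t
    have : ((∑ n ∈ s, lam n • (f n - f 0)) : C(K, ℂ)) t = Z := by
      rw [hZ]
      simp [hv, smul_eq_mul]
    rwa [this] at heval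
  -- lower bound via the functional
  have hfun : T θ * ‖w‖ ^ 2 - S * (2 * δ₁ * ‖w‖) ≤ ‖Z‖ * ‖w‖ := by
    have hre : (θ * Z * (starRingEnd ℂ) w).re
        = ∑ n ∈ s, (θ * lam n * v n * (starRingEnd ℂ) w).re := by
      rw [hZ, Finset.mul_sum, Finset.sum_mul, ← Complex.re_sum]
      congr 1
      apply Finset.sum_congr rfl
      intro n _
      ring_nf
    have hub : (θ * Z * (starRingEnd ℂ) w).re ≤ ‖Z‖ * ‖w‖ := by
      calc (θ * Z * (starRingEnd ℂ) w).re ≤ ‖θ * Z * (starRingEnd ℂ) w‖ :=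
            Complex.re_le_norm _
        _ = ‖θ‖ * ‖Z‖ * ‖w‖ := by rw [norm_mul, norm_mul, RCLike.norm_conj]
        _ = ‖Z‖ * ‖w‖ := by rw [hθ, one_mul]
    have hlb : T θ * ‖w‖ ^ 2 - S * (2 * δ₁ * ‖w‖) ≤ (θ * Z * (starRingEnd ℂ) w).re := by
      rw [hre, hT, hSdef, Finset.sum_mul, Finset.sum_mul, ← Finset.sum_sub_distrib]
      exact Finset.sum_le_sum hperterm
    linarith
  have hTlb : S / 4 * ‖w‖ ^ 2 - S * (2 * δ₁ * ‖w‖) ≤ ‖Z‖ * ‖w‖ := by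
    have : S / 4 * ‖w‖ ^ 2 ≤ T θ * ‖w‖ ^ 2 := by
      apply mul_le_mul_of_nonneg_right hTθ (by positivity)
    linarith
  -- cancel ‖w‖
  have hZlb : S / 4 * ‖w‖ - S * (2 * δ₁) ≤ ‖Z‖ := by
    have := mul_le_mul_of_nonneg_right (le_refl (1 / ‖w‖)) (le_refl (0:ℝ))
    nlinarith [hTlb, hwpos, sq_nonneg ‖w‖]
  -- conclude
  have hfinal : (ε * Real.sqrt 2 / 8 - δ) * S ≤ ‖Z‖ := by
    have h7 : S / 4 * (ε - 2 * δ₁) - S * (2 * δ₁) ≤ S / 4 * ‖w‖ - S * (2 * δ₁) := by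
      have : S / 4 * (ε - 2 * δ₁) ≤ S / 4 * ‖w‖ :=
        mul_le_mul_of_nonneg_left hwlb (by positivity)
      linarith
    have h8 : (ε * Real.sqrt 2 / 8 - δ) * S ≤ S / 4 * (ε - 2 * δ₁) - S * (2 * δ₁) := by
      have hεs : ε * Real.sqrt 2 ≤ ε * 2 := mul_le_mul_of_nonneg_left hsqrt2 hε.le
      have hcoef : ε * Real.sqrt 2 / 8 - δ ≤ ε / 4 - (5 / 2) * δ₁ := by linarith
      have := mul_le_mul_of_nonneg_right hcoef hS0
      nlinarith
    linarith
  calc (ε * Real.sqrt 2 / 8 - δ) * S ≤ ‖Z‖ := hfinal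
    _ ≤ ‖∑ n ∈ s, lam n • (f n - f 0)‖ := hZnorm
end

section
/- Let K be a compact metric space, (f_n) a bounded sequence in C(K, ℝ), and ε > 0. Then either (f_n) admits an ε-weak Cauchy subsequence, or for every δ > 0 there exists a subsequence (f_{m_n}) such that ‖Σ_{n≥2} λ_n (f_{m_n} − f_{m_1})‖_∞ ≥ (ε/2 − δ) · Σ_{n≥2} |λ_n| for every finitely supported sequence of real scalars (λ_n)_{n≥2}. -/
open Classical Filter

section Comb
variable {X : Type*}

/-- Pattern intersection: points realizing sign pattern `σ` on the finite index set `s`. -/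
def patInter (A B : ℕ → Set X) (σ : ℕ → Bool) (s : Finset ℕ) : Set X :=
  {x | ∀ n ∈ s, x ∈ (if σ n then A n else B n)}

/-- `x` belongs to infinitely many `A n` and infinitely many `B n`, `n ∈ R`. -/
def BothIO (A B : ℕ → Set X) (R : Set ℕ) (x : X) : Prop :=
  {n | n ∈ R ∧ x ∈ A n}.Infinite ∧ {n | n ∈ R ∧ x ∈ B n}.Infinite

/-- Combinatorial forcing largeness notion. -/
def Large (A B : ℕ → Set X) (s : Finset ℕ) (σ : ℕ → Bool) (R : Set ℕ) : Prop :=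
  ∀ R', R' ⊆ R → R'.Infinite → ∃ x ∈ patInter A B σ s, BothIO A B R' x

variable {A B : ℕ → Set X}

lemma patInter_mono {σ : ℕ → Bool} {s s' : Finset ℕ} (h : s ⊆ s') :
    patInter A B σ s' ⊆ patInter A B σ s := fun _ hx n hn => hx n (h hn)

lemma infinite_of_unbounded {S : Set ℕ} (h : ∀ N, ∃ j ∈ S, N < j) : S.Infinite := by
  intro hfin
  obtain ⟨b, hb⟩ := hfin.bddAbove
  obtain ⟨j, hj, hj2⟩ := h b
  exact absurd (hb hj) (by omega)

lemma exists_chain {α : Type*} (Rel : ℕ → α → α → Prop) (a0 : α)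
    (h : ∀ n a, ∃ b, Rel n a b) :
    ∃ u : ℕ → α, u 0 = a0 ∧ ∀ j, Rel j (u j) (u (j + 1)) :=
  ⟨fun n => Nat.rec a0 (fun j a => (h j a).choose) n, rfl, fun j => (h j _).choose_spec⟩

lemma sep_gt_infinite {R : Set ℕ} (hR : R.Infinite) (n : ℕ) :
    {x | x ∈ R ∧ n < x}.Infinite := by
  have : {x | x ∈ R ∧ n < x} = R \ {x | x ≤ n} := by
    ext x
    simp only [Set.mem_setOf_eq, Set.mem_diff, not_le]
  rw [this]
  exact hR.diff (Set.finite_le_nat n)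

/-- The key extension step of the combinatorial forcing. -/
lemma step_lemma (A B : ℕ → Set X) (s : Finset ℕ) (R : Set ℕ) (hR : R.Infinite)
    (hL : ∀ σ, Large A B s σ R) (b : ℕ) :
    ∃ n ∈ R, b < n ∧ ∃ R', R' ⊆ R ∧ R'.Infinite ∧ (∀ x ∈ R', n < x) ∧
      ∀ σ, Large A B (insert n s) σ R' := by
  by_contra hcon
  push_neg at hcon
  set b0 : ℕ := max b (s.sup id) with hb0
  set Inv : ℕ × (ℕ → Bool) × Set ℕ → Prop :=
    fun a => a.2.2 ⊆ R ∧ a.2.2.Infinite ∧ (∀ x ∈ a.2.2, a.1 < x) ∧ b0 ≤ a.1 with hInv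
  set Rel : ℕ → {a // Inv a} → {a // Inv a} → Prop := fun _ p q =>
    p.1.1 < q.1.1 ∧ q.1.1 ∈ p.1.2.2 ∧ q.1.2.2 ⊆ p.1.2.2 ∧
      ∀ x ∈ patInter A B q.1.2.1 (insert q.1.1 s), ¬ BothIO A B q.1.2.2 x with hRel
  have init : Inv (b0, fun _ => true, {x | x ∈ R ∧ b0 < x}) :=
    ⟨fun x hx => hx.1, sep_gt_infinite hR b0, fun x hx => hx.2, le_rfl⟩
  have stepex : ∀ j (p : {a // Inv a}), ∃ q, Rel j p q := by
    intro j p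
    obtain ⟨⟨n, σ, W⟩, hWR, hWinf, hWgt, hbn⟩ := p
    obtain ⟨n', hn'W⟩ := hWinf.nonempty
    have hn'R : n' ∈ R := hWR hn'W
    have hnn' : n < n' := hWgt _ hn'W
    have hbn' : b < n' := lt_of_le_of_lt (le_trans (le_max_left _ _) hbn) hnn'
    have hsub : {x | x ∈ W ∧ n' < x} ⊆ R := fun x hx => hWR hx.1
    have hinf : {x | x ∈ W ∧ n' < x}.Infinite := sep_gt_infinite hWinf n'
    obtain ⟨σ', hσ'⟩ := hcon n' hn'R hbn' _ hsub hinf (fun x hx => hx.2)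
    rw [Large] at hσ'
    push_neg at hσ'
    obtain ⟨W', hW'sub, hW'inf, hW'empty⟩ := hσ'
    refine ⟨⟨(n', σ', W'), ?_⟩, ?_⟩
    · exact ⟨fun x hx => hWR (hW'sub hx).1, hW'inf,
        fun x hx => (hW'sub hx).2, le_trans hbn (le_of_lt hnn')⟩
    · refine ⟨hnn', hn'W, fun x hx => (hW'sub hx).1, ?_⟩
      intro x hx hio
      exact hW'empty x hx hio
  obtain ⟨u, hu0, hustep⟩ := exists_chain Rel ⟨_, init⟩ stepex
  set nj : ℕ → ℕ := fun j => (u j).1.1 with hnj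
  set σj : ℕ → (ℕ → Bool) := fun j => (u j).1.2.1 with hσj
  set Wj : ℕ → Set ℕ := fun j => (u j).1.2.2 with hWj
  have hmono : StrictMono nj := strictMono_nat_of_lt_succ (fun j => (hustep j).1)
  have hWnest : ∀ k j, k ≤ j → Wj j ⊆ Wj k := by
    intro k j hkj
    induction j, hkj using Nat.le_induction with
    | base => exact subset_rfl
    | succ j hkj ih => exact subset_trans (hustep j).2.2.1 ih
  have hnW : ∀ j, nj (j+1) ∈ Wj j := fun j => (hustep j).2.1
  have hWR : ∀ j, Wj j ⊆ R := fun j => (u j).2.1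
  have hnjR : ∀ j, nj (j+1) ∈ R := fun j => hWR j (hnW j)
  have : Finite ((↥s → Bool) × Bool) := by infer_instance
  set F : ℕ → ((↥s → Bool) × Bool) :=
    fun j => (fun i => σj (j+1) i.1, σj (j+1) (nj (j+1))) with hF
  obtain ⟨c, hc⟩ := Finite.exists_infinite_fiber F
  have hcJ : (F ⁻¹' {c}).Infinite := Set.infinite_coe_iff.mp hc
  set σstar : ℕ → Bool := fun i => if h : i ∈ s then c.1 ⟨i, h⟩ else c.2 with hσstar
  set Rss : Set ℕ := (fun j => nj (j+1)) '' (F ⁻¹' {c}) with hRss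
  have hRssR : Rss ⊆ R := by rintro _ ⟨j, _, rfl⟩; exact hnjR j
  have hRssinf : Rss.Infinite :=
    hcJ.image (Set.injOn_of_injective (fun a b h => by
      have := hmono.injective (a₁ := a+1) (a₂ := b+1) h; omega))
  obtain ⟨t, htpat, htio⟩ := hL σstar Rss hRssR hRssinf
  have hside : {n | n ∈ Rss ∧ t ∈ (if c.2 then A n else B n)}.Infinite := by
    cases hc2 : c.2
    · simpa [hc2] using htio.2
    · simpa [hc2] using htio.1
  obtain ⟨nstar, hnstar⟩ := hside.nonempty
  obtain ⟨⟨j, hjfib, rfl⟩, htside⟩ := hnstar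
  have hFj : F j = c := hjfib
  have hσrest : ∀ i (h : i ∈ s), σj (j+1) i = c.1 ⟨i, h⟩ := by
    intro i h
    have := congrArg Prod.fst hFj
    exact congrFun this ⟨i, h⟩
  have hσn : σj (j+1) (nj (j+1)) = c.2 := congrArg Prod.snd hFj
  have htpat' : t ∈ patInter A B (σj (j+1)) (insert (nj (j+1)) s) := by
    intro i hi
    rcases Finset.mem_insert.mp hi with h | h
    · subst h
      rw [hσn]
      exact htside
    · rw [hσrest i h]
      have hthis := htpat i h
      have hσsi : σstar i = c.1 ⟨i, h⟩ := dif_pos h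
      rwa [hσsi] at hthis
  have hIOW : BothIO A B (Wj (j+1)) t := by
    have key : ∀ (S : ℕ → Set X), {n | n ∈ Rss ∧ t ∈ S n}.Infinite →
        {n | n ∈ Wj (j+1) ∧ t ∈ S n}.Infinite := by
      intro S hS
      have h1 : {n | n ∈ Rss ∧ t ∈ S n ∧ nj (j+1) < n}.Infinite := by
        have : {n | n ∈ Rss ∧ t ∈ S n ∧ nj (j+1) < n}
            = {n | n ∈ Rss ∧ t ∈ S n} \ {n | n ≤ nj (j+1)} := by
          ext x; simp [Set.mem_diff]; tauto
        rw [this]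
        exact hS.diff (Set.finite_le_nat _)
      refine h1.mono ?_
      rintro _ ⟨⟨i, hifib, rfl⟩, htS, hlt⟩
      have hlt' : nj (j + 1) < nj (i + 1) := hlt
      have hij : j + 1 ≤ i := by
        by_contra hcon2
        push_neg at hcon2
        have hle : nj (i + 1) ≤ nj (j + 1) := hmono.monotone (by omega)
        omega
      exact ⟨hWnest (j+1) i hij (hnW i), htS⟩
    exact ⟨key A htio.1, key B htio.2⟩
  exact (hustep j).2.2.2 t htpat' hIOW

/-- Main forcing construction: if every infinite subset of `M` admits a point in
infinitely many `A n` and infinitely many `B n`, then there is a subsequence along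
which the pairs `(A n, B n)` are Boolean independent. -/
lemma forcing (A B : ℕ → Set X) (M : Set ℕ) (hM : M.Infinite)
    (hLarge : ∀ R', R' ⊆ M → R'.Infinite → ∃ x, BothIO A B R' x) :
    ∃ m : ℕ → ℕ, StrictMono m ∧ (∀ j, m j ∈ M) ∧
      ∀ (F : Finset ℕ) (σ : ℕ → Bool), ↑F ⊆ Set.range m →
        (patInter A B σ F).Nonempty := by
  set Inv : ℕ × Finset ℕ × Set ℕ → Prop := fun a =>
    ↑a.2.1 ⊆ M ∧ (∀ i ∈ a.2.1, i ≤ a.1) ∧ a.2.2 ⊆ M ∧ a.2.2.Infinite ∧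
      (∀ x ∈ a.2.2, a.1 < x) ∧ ∀ σ, Large A B a.2.1 σ a.2.2 with hI
  set Rel : ℕ → {a // Inv a} → {a // Inv a} → Prop := fun _ p q =>
    p.1.1 < q.1.1 ∧ q.1.2.1 = insert q.1.1 p.1.2.1 ∧ q.1.2.2 ⊆ p.1.2.2 ∧
      q.1.1 ∈ p.1.2.2 with hRel
  have init : Inv (0, ∅, {x | x ∈ M ∧ 0 < x}) := by
    refine ⟨by simp, by simp, fun x hx => hx.1, sep_gt_infinite hM 0,
      fun x hx => hx.2, ?_⟩
    intro σ R' hsub hinf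
    obtain ⟨x, hx⟩ := hLarge R' (fun y hy => (hsub hy).1) hinf
    exact ⟨x, fun n hn => absurd hn (Finset.notMem_empty n), hx⟩
  have stepex : ∀ j (p : {a // Inv a}), ∃ q, Rel j p q := by
    intro j p
    obtain ⟨⟨n, s, R⟩, hsM, hsn, hRM, hRinf, hRgt, hLs⟩ := p
    obtain ⟨n', hn'R, hbn', R', hR'R, hR'inf, hR'gt, hR'L⟩ :=
      step_lemma A B s R hRinf hLs n
    refine ⟨⟨(n', insert n' s, R'), ?_⟩, hbn', rfl, hR'R, hn'R⟩
    refine ⟨?_, ?_, hR'R.trans hRM, hR'inf, hR'gt, hR'L⟩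
    · intro x hx
      rcases Finset.mem_insert.mp hx with h | h
      · exact h ▸ hRM hn'R
      · exact hsM h
    · intro i hi
      rcases Finset.mem_insert.mp hi with h | h
      · exact le_of_eq h
      · exact le_trans (hsn i h) (le_of_lt hbn')
  obtain ⟨u, hu0, hustep⟩ := exists_chain Rel ⟨_, init⟩ stepex
  set m : ℕ → ℕ := fun j => (u (j+1)).1.1 with hm
  set sj : ℕ → Finset ℕ := fun j => (u j).1.2.1 with hsj
  set Rj : ℕ → Set ℕ := fun j => (u j).1.2.2 with hRj
  have hmono : StrictMono m := strictMono_nat_of_lt_succ (fun j => (hustep (j+1)).1)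
  have hmM : ∀ j, m j ∈ M := fun j => (u j).2.2.2.1 ((hustep j).2.2.2)
  have hcons : ∀ j, sj (j+1) = insert (m j) (sj j) := fun j => (hustep j).2.1
  have hsmono : ∀ j j', j ≤ j' → sj j ⊆ sj j' := by
    intro j j' h
    induction j', h using Nat.le_induction with
    | base => exact subset_rfl
    | succ j' h ih => rw [hcons j']; exact ih.trans (Finset.subset_insert _ _)
  have hmem : ∀ i, m i ∈ sj (i+1) := by
    intro i; rw [hcons i]; exact Finset.mem_insert_self _ _
  have hcover : ∀ F : Finset ℕ, ↑F ⊆ Set.range m → ∃ J, F ⊆ sj J := by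
    intro F
    induction F using Finset.induction with
    | empty => exact fun _ => ⟨0, by simp⟩
    | insert _ _ hx ih =>
      rename_i x F
      intro hsub
      obtain ⟨J, hJ⟩ := ih (fun y hy =>
        hsub (Finset.mem_coe.mpr (Finset.mem_insert_of_mem (Finset.mem_coe.mp hy))))
      obtain ⟨i, hi⟩ := hsub (Finset.mem_coe.mpr (Finset.mem_insert_self x F))
      refine ⟨max J (i+1), ?_⟩
      intro y hy
      rcases Finset.mem_insert.mp hy with h | h
      · subst h
        exact hsmono (i+1) _ (le_max_right _ _) (hi ▸ hmem i)
      · exact hsmono J _ (le_max_left _ _) (hJ h)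
  refine ⟨m, hmono, hmM, ?_⟩
  intro F σ hsub
  obtain ⟨J, hJ⟩ := hcover F hsub
  have hLsJ : Large A B (sj J) σ (Rj J) := (u J).2.2.2.2.2.2 σ
  obtain ⟨x, hxpat, -⟩ := hLsJ (Rj J) subset_rfl (u J).2.2.2.2.1
  exact ⟨x, patInter_mono hJ hxpat⟩

/-- The dichotomy: independent subsequence, or a subsequence along which no point is
infinitely often in both families. -/
lemma lemA (A B : ℕ → Set X) (M : Set ℕ) (hM : M.Infinite) :
    (∃ m : ℕ → ℕ, StrictMono m ∧ (∀ j, m j ∈ M) ∧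
      ∀ (F : Finset ℕ) (σ : ℕ → Bool), ↑F ⊆ Set.range m →
        (patInter A B σ F).Nonempty) ∨
    (∃ N, N ⊆ M ∧ N.Infinite ∧ ∀ x, ¬ BothIO A B N x) := by
  by_cases h : ∀ R', R' ⊆ M → R'.Infinite → ∃ x, BothIO A B R' x
  · exact Or.inl (forcing A B M hM h)
  · push_neg at h
    obtain ⟨N, hNM, hNinf, hN⟩ := h
    exact Or.inr ⟨N, hNM, hNinf, hN⟩

end Comb

section Analytic

lemma estimate {K : Type*} [MetricSpace K] [CompactSpace K] (f : ℕ → C(K, ℝ))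
    (p q : ℝ) (hpq : p ≤ q) (m : ℕ → ℕ) (hm : StrictMono m)
    (hind : ∀ (F : Finset ℕ) (σ : ℕ → Bool), ↑F ⊆ Set.range m →
      (patInter (fun n => {u : K | f n u ≤ p}) (fun n => {u : K | q ≤ f n u}) σ F).Nonempty)
    (lam : ℕ →₀ ℝ) :
    (q - p) / 2 * ∑ n ∈ lam.support, |lam n| ≤
      ‖∑ n ∈ lam.support, lam n • (f (m (n + 1)) - f (m 0))‖ := by
  set S := lam.support with hS
  set T := ∑ n ∈ S, lam n with hT
  set g : C(K, ℝ) := ∑ n ∈ S, lam n • (f (m (n + 1)) - f (m 0)) with hg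
  set σp : ℕ → Bool := fun i =>
    if i = m 0 then decide (0 ≤ T)
    else decide (¬ ∃ n, m (n + 1) = i ∧ 0 < lam n) with hσp
  set σm : ℕ → Bool := fun i => ! σp i with hσm
  set F : Finset ℕ := insert (m 0) (S.image (fun n => m (n + 1))) with hF
  have hFsub : ↑F ⊆ Set.range m := by
    intro x hx
    rcases Finset.mem_insert.mp hx with h | h
    · exact ⟨0, h.symm⟩
    · obtain ⟨n, _, rfl⟩ := Finset.mem_image.mp h
      exact ⟨n + 1, rfl⟩
  obtain ⟨tp, htp⟩ := hind F σp hFsub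
  obtain ⟨tm, htm⟩ := hind F σm hFsub
  have hne : ∀ n : ℕ, m (n + 1) ≠ m 0 := fun n h => by
    have := hm.injective h; omega
  have hmemF : ∀ n ∈ S, m (n + 1) ∈ F := fun n hn =>
    Finset.mem_insert_of_mem (Finset.mem_image_of_mem _ hn)
  have hm0F : m 0 ∈ F := Finset.mem_insert_self _ _
  have hσpval : ∀ n ∈ S, σp (m (n + 1)) = decide (¬ 0 < lam n) := by
    intro n _
    rw [hσp]
    simp only [if_neg (hne n)]
    congr 1
    apply propext
    constructor
    · intro h hpos; exact h ⟨n, rfl, hpos⟩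
    · rintro h ⟨n', hn', hpos⟩
      have : n' = n := by have := hm.injective hn'; omega
      exact h (this ▸ hpos)
  have hkey : ∀ n ∈ S, |lam n| * (q - p) ≤
      lam n * (f (m (n + 1)) tp - f (m (n + 1)) tm) := by
    intro n hn
    have h1 := htp (m (n + 1)) (hmemF n hn)
    have h2 := htm (m (n + 1)) (hmemF n hn)
    rw [hσpval n hn] at h1
    rw [hσm] at h2
    simp only [hσpval n hn] at h2
    rcases lt_trichotomy (lam n) 0 with hneg | hzero | hpos
    · rw [if_pos (by simp [not_lt.mpr (le_of_lt hneg)])] at h1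
      rw [if_neg (by simp [not_lt.mpr (le_of_lt hneg)])] at h2
      have hA : f (m (n + 1)) tp ≤ p := h1
      have hB : q ≤ f (m (n + 1)) tm := h2
      rw [abs_of_neg hneg]
      nlinarith
    · simp [hzero]
    · rw [if_neg (by simp [hpos])] at h1
      rw [if_pos (by simp [hpos])] at h2
      have hB : q ≤ f (m (n + 1)) tp := h1
      have hA : f (m (n + 1)) tm ≤ p := h2
      rw [abs_of_pos hpos]
      nlinarith
  have hkey0 : T * (f (m 0) tp - f (m 0) tm) ≤ 0 := by
    have h1 := htp (m 0) hm0F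
    have h2 := htm (m 0) hm0F
    rw [hσp] at h1
    rw [hσm, hσp] at h2
    simp only [if_pos rfl] at h1 h2
    by_cases hTs : 0 ≤ T
    · rw [if_pos (by simp [hTs])] at h1
      rw [if_neg (by simp [hTs])] at h2
      have h3 : f (m 0) tp ≤ p := h1
      have h4 : q ≤ f (m 0) tm := h2
      exact mul_nonpos_iff.mpr (Or.inl ⟨hTs, by linarith⟩)
    · push_neg at hTs
      rw [if_neg (by simp [not_le.mpr hTs])] at h1
      rw [if_pos (by simp [not_le.mpr hTs])] at h2
      have h3 : q ≤ f (m 0) tp := h1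
      have h4 : f (m 0) tm ≤ p := h2
      exact mul_nonpos_iff.mpr (Or.inr ⟨le_of_lt hTs, by linarith⟩)
  have hgtp : ∀ t : K, g t = ∑ n ∈ S, lam n * (f (m (n + 1)) t - f (m 0) t) := by
    intro t; rw [hg]; simp
  have hsum : (q - p) * ∑ n ∈ S, |lam n| ≤ g tp - g tm := by
    rw [hgtp tp, hgtp tm]
    have heq : ∑ n ∈ S, lam n * (f (m (n + 1)) tp - f (m 0) tp)
        - ∑ n ∈ S, lam n * (f (m (n + 1)) tm - f (m 0) tm)
        = (∑ n ∈ S, lam n * (f (m (n + 1)) tp - f (m (n + 1)) tm))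
          - T * (f (m 0) tp - f (m 0) tm) := by
      rw [hT, Finset.sum_mul, ← Finset.sum_sub_distrib, ← Finset.sum_sub_distrib]
      apply Finset.sum_congr rfl
      intro n _; ring
    rw [heq]
    have h1 : ∑ n ∈ S, (q - p) * |lam n| ≤
        ∑ n ∈ S, lam n * (f (m (n + 1)) tp - f (m (n + 1)) tm) := by
      apply Finset.sum_le_sum
      intro n hn
      calc (q - p) * |lam n| = |lam n| * (q - p) := by ring
        _ ≤ _ := hkey n hn
    rw [Finset.mul_sum]
    linarith [h1, hkey0]
  have hb1 : g tp ≤ ‖g‖ := by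
    have := ContinuousMap.norm_coe_le_norm g tp
    rw [Real.norm_eq_abs] at this
    exact (abs_le.mp this).2
  have hb2 : -‖g‖ ≤ g tm := by
    have := ContinuousMap.norm_coe_le_norm g tm
    rw [Real.norm_eq_abs] at this
    exact (abs_le.mp this).1
  linarith

lemma weakCauchy {K : Type*} [MetricSpace K] [CompactSpace K] (f : ℕ → C(K, ℝ))
    (C : ℝ) (hC : ∀ n, ‖f n‖ ≤ C) (ε δ : ℝ) (hε : 0 < ε) (hδ : 0 < δ)
    (hH : ¬ ∃ p q : ℚ, (ε - 2 * δ < (q : ℝ) - (p : ℝ)) ∧ ∃ m : ℕ → ℕ, StrictMono m ∧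
      ∀ (F : Finset ℕ) (σ : ℕ → Bool), ↑F ⊆ Set.range m →
        (patInter (fun n => {u : K | f n u ≤ (p : ℝ)})
          (fun n => {u : K | (q : ℝ) ≤ f n u}) σ F).Nonempty) :
    ∃ m : ℕ → ℕ, StrictMono m ∧
      ∀ t : K, ∃ n₀ : ℕ, ∀ n ≥ n₀, ∀ k ≥ n₀, |f (m n) t - f (m k) t| < ε := by
  classical
  set e : ℚ × ℚ ≃ ℕ := Denumerable.eqv (ℚ × ℚ) with he
  set A : ℚ → ℕ → Set K := fun p n => {u | f n u ≤ (p : ℝ)} with hA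
  set B : ℚ → ℕ → Set K := fun q n => {u | (q : ℝ) ≤ f n u} with hB
  set gap : ℕ → Prop :=
    fun k => ε - 2 * δ < (((e.symm k).2 : ℝ) - ((e.symm k).1 : ℝ)) with hgap
  set Rel : ℕ → {S : Set ℕ // S.Infinite} → {S : Set ℕ // S.Infinite} → Prop :=
    fun k M M' => M'.1 ⊆ M.1 ∧
      (gap k → ∀ x : K, ¬ BothIO (A (e.symm k).1) (B (e.symm k).2) M'.1 x) with hR
  have stepex : ∀ k M, ∃ M', Rel k M M' := by
    intro k M
    by_cases hg : gap k
    · rcases lemA (A (e.symm k).1) (B (e.symm k).2) M.1 M.2 with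
        ⟨m, hm, _, hind⟩ | ⟨N, hNM, hNinf, hN⟩
      · exact absurd ⟨(e.symm k).1, (e.symm k).2, hg, m, hm, hind⟩ hH
      · exact ⟨⟨N, hNinf⟩, hNM, fun _ => hN⟩
    · exact ⟨M, subset_rfl, fun h => absurd h hg⟩
  obtain ⟨u, hu0, hustep⟩ := exists_chain Rel ⟨Set.univ, Set.infinite_univ⟩ stepex
  set Mk : ℕ → Set ℕ := fun k => (u k).1 with hMk
  have stepex2 : ∀ j (v : ℕ), ∃ v', v < v' ∧ v' ∈ Mk (j + 1) := by
    intro j v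
    obtain ⟨v', hv', hvv'⟩ := (u (j + 1)).2.exists_gt v
    exact ⟨v', hvv', hv'⟩
  obtain ⟨m, hm0, hmstep⟩ :=
    exists_chain (fun j v v' => v < v' ∧ v' ∈ Mk (j + 1)) 0 stepex2
  have hmono : StrictMono m := strictMono_nat_of_lt_succ fun j => (hmstep j).1
  have hnest : ∀ k j, k ≤ j → Mk j ⊆ Mk k := by
    intro k j hkj
    induction j, hkj using Nat.le_induction with
    | base => exact subset_rfl
    | succ j hkj ih => exact subset_trans (hustep j).1 ih
  have hmMk : ∀ j k, k + 1 ≤ j → m j ∈ Mk (k + 1) := by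
    intro j k hj
    cases j with
    | zero => omega
    | succ j' => exact hnest (k + 1) (j' + 1) hj (hmstep j').2
  refine ⟨m, hmono, ?_⟩
  intro t
  set gs : ℕ → ℝ := fun j => f (m j) t with hgs
  have habs : ∀ j, |gs j| ≤ C := fun j => by
    have h1 := ContinuousMap.norm_coe_le_norm (f (m j)) t
    rw [Real.norm_eq_abs] at h1
    exact le_trans h1 (hC (m j))
  have hble : IsBoundedUnder (· ≤ ·) atTop gs :=
    isBoundedUnder_of ⟨C, fun j => (abs_le.mp (habs j)).2⟩
  have hbge : IsBoundedUnder (· ≥ ·) atTop gs :=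
    isBoundedUnder_of ⟨-C, fun j => (abs_le.mp (habs j)).1⟩
  set L := liminf gs atTop with hL
  set U := limsup gs atTop with hU
  have hUL : U - L < ε := by
    by_contra hcon
    push_neg at hcon
    obtain ⟨p, hp1, hp2⟩ := exists_rat_btwn (show L < L + δ by linarith)
    obtain ⟨q, hq1, hq2⟩ := exists_rat_btwn (show U - δ < U by linarith)
    set k : ℕ := e (p, q) with hk
    have hgapk : gap k := by
      rw [hgap, hk]
      simp only [Equiv.symm_apply_apply]
      linarith
    have hprop := (hustep k).2 hgapk
    rw [hk] at hprop
    simp only [Equiv.symm_apply_apply] at hprop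
    apply hprop t
    constructor
    · apply infinite_of_unbounded
      intro N
      have hfreq : ∃ᶠ j in atTop, gs j < (p : ℝ) :=
        frequently_lt_of_liminf_lt hble.isCoboundedUnder_ge hp1
      obtain ⟨j, hj2, hj1⟩ :=
        (hfreq.and_eventually (eventually_ge_atTop (max (N + 1) (k + 1)))).exists
      refine ⟨m j, ⟨?_, le_of_lt hj2⟩, ?_⟩
      · exact hmMk j k (le_trans (le_max_right _ _) hj1)
      · have : j ≤ m j := hmono.le_apply
        omega
    · apply infinite_of_unbounded
      intro N
      have hfreq : ∃ᶠ j in atTop, (q : ℝ) < gs j :=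
        frequently_lt_of_lt_limsup hbge.isCoboundedUnder_le hq2
      obtain ⟨j, hj2, hj1⟩ :=
        (hfreq.and_eventually (eventually_ge_atTop (max (N + 1) (k + 1)))).exists
      refine ⟨m j, ⟨?_, le_of_lt hj2⟩, ?_⟩
      · exact hmMk j k (le_trans (le_max_right _ _) hj1)
      · have : j ≤ m j := hmono.le_apply
        omega
  set η : ℝ := (ε - (U - L)) / 2 with hη
  have hη0 : 0 < η := by rw [hη]; linarith
  have h1 : ∀ᶠ j in atTop, gs j < U + η :=
    eventually_lt_of_limsup_lt (by linarith) hble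
  have h2 : ∀ᶠ j in atTop, L - η < gs j :=
    eventually_lt_of_lt_liminf (by linarith) hbge
  obtain ⟨n₀, hn₀⟩ := eventually_atTop.mp (h1.and h2)
  refine ⟨n₀, ?_⟩
  intro n hn k hk
  obtain ⟨ha1, ha2⟩ := hn₀ n hn
  obtain ⟨hb1, hb2⟩ := hn₀ k hk
  have hsum : U - L + 2 * η = ε := by rw [hη]; ring
  rw [abs_sub_lt_iff]
  constructor <;> [skip; skip] <;>
    · show _ - _ < ε
      have : gs n < U + η := ha1
      have : gs k < U + η := hb1
      have : L - η < gs n := ha2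
      have : L - η < gs k := hb2
      linarith

end Analytic

/-- Real version of the main theorem: for a bounded sequence in a real C(K)
space and ε > 0, either there is an ε-weak Cauchy subsequence, or for every
δ > 0 there is a subsequence (f_{m_n}) with
‖Σ_{n≥2} λ_n (f_{m_n} − f_{m_1})‖ ≥ (ε/2 − δ)·Σ_{n≥2}|λ_n|. -/
theorem main_CK_real (K : Type*) [MetricSpace K] [CompactSpace K]
    (f : ℕ → C(K, ℝ)) (hf : ∃ C : ℝ, ∀ n, ‖f n‖ ≤ C) (ε : ℝ) (hε : 0 < ε) :
    (∃ m : ℕ → ℕ, StrictMono m ∧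
        ∀ t : K, ∃ n₀ : ℕ, ∀ n ≥ n₀, ∀ k ≥ n₀, |f (m n) t - f (m k) t| < ε) ∨
      ∀ δ : ℝ, 0 < δ → ∃ m : ℕ → ℕ, StrictMono m ∧
        ∀ lam : ℕ →₀ ℝ,
          ‖∑ n ∈ lam.support, lam n • (f (m (n + 1)) - f (m 0))‖ ≥
            (ε / 2 - δ) * ∑ n ∈ lam.support, |lam n| := by
  obtain ⟨C, hC⟩ := hf
  by_cases hL : ∃ m : ℕ → ℕ, StrictMono m ∧
      ∀ t : K, ∃ n₀ : ℕ, ∀ n ≥ n₀, ∀ k ≥ n₀, |f (m n) t - f (m k) t| < ε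
  · exact Or.inl hL
  · right
    intro δ hδ
    by_cases hδ2 : δ < ε / 2
    · by_cases hH : ∃ p q : ℚ, (ε - 2 * δ < (q : ℝ) - (p : ℝ)) ∧
          ∃ m : ℕ → ℕ, StrictMono m ∧
          ∀ (F : Finset ℕ) (σ : ℕ → Bool), ↑F ⊆ Set.range m →
            (patInter (fun n => {u : K | f n u ≤ (p : ℝ)})
              (fun n => {u : K | (q : ℝ) ≤ f n u}) σ F).Nonempty
      · obtain ⟨p, q, hgapq, m, hm, hind⟩ := hH
        refine ⟨m, hm, ?_⟩
        intro lam
        have hpq : (p : ℝ) ≤ (q : ℝ) := by linarith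
        have h1 := estimate f (p : ℝ) (q : ℝ) hpq m hm hind lam
        have hnn : (0 : ℝ) ≤ ∑ n ∈ lam.support, |lam n| :=
          Finset.sum_nonneg fun n _ => abs_nonneg _
        have h2 : (ε / 2 - δ) * ∑ n ∈ lam.support, |lam n| ≤
            ((q : ℝ) - (p : ℝ)) / 2 * ∑ n ∈ lam.support, |lam n| :=
          mul_le_mul_of_nonneg_right (by linarith) hnn
        exact le_trans h2 h1
      · exact absurd (weakCauchy f C hC ε δ hε hδ hH) hL
    · push_neg at hδ2
      refine ⟨id, strictMono_id, ?_⟩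
      intro lam
      have hnn : (0 : ℝ) ≤ ∑ n ∈ lam.support, |lam n| :=
        Finset.sum_nonneg fun n _ => abs_nonneg _
      have h1 : (ε / 2 - δ) * ∑ n ∈ lam.support, |lam n| ≤ 0 :=
        mul_nonpos_iff.mpr (Or.inr ⟨by linarith, hnn⟩)
      exact le_trans h1 (norm_nonneg _)
end

section
/- Let (x_n) be a bounded sequence in a complex Banach space X and suppose that for some fixed ε > 0, no subsequence of (x_n) is ε-weak Cauchy. Then for every δ > 0 there exist a subsequence (x_{m_n}) and an integer k ≥ 2 such that ‖Σ_{n≥k} λ_n x_{m_n}‖ ≥ (ε√2/8 − δ) · Σ_{n≥k} |λ_n| for every finitely supported sequence of complex scalars (λ_n)_{n≥k}; in particular (x_{m_n})_{n≥k} dominates the usual ℓ¹-basis with constant ε√2/8 − δ. -/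
open Set
section Comb
variable {ι : Type*}

def Osc (A B : ι → ℕ → Prop) (i : ι) (M : Set ℕ) : Prop :=
  {n ∈ M | A i n}.Infinite ∧ {n ∈ M | B i n}.Infinite

def Good (A B : ι → ℕ → Prop) (S : Set ι) (M : Set ℕ) : Prop :=
  ∀ M' ⊆ M, M'.Infinite → ∃ i ∈ S, Osc A B i M'

lemma Good.mono {A B : ι → ℕ → Prop} {S : Set ι} {M M' : Set ℕ}
    (h : Good A B S M) (hM : M' ⊆ M) : Good A B S M' :=
  fun M'' h1 h2 => h M'' (h1.trans hM) h2

lemma nat_rec_chain {α : Type*} (Q : ℕ → α → Prop) (R : ℕ → α → α → Prop) (a0 : α)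
    (h0 : Q 0 a0) (hstep : ∀ j a, Q j a → ∃ a', Q (j + 1) a' ∧ R j a a') :
    ∃ f : ℕ → α, f 0 = a0 ∧ (∀ j, Q j (f j)) ∧ ∀ j, R j (f j) (f (j + 1)) := by
  let key : ∀ j (a : {a // Q j a}), {a' // Q (j+1) a'} := fun j a =>
    ⟨(hstep j a.1 a.2).choose, (hstep j a.1 a.2).choose_spec.1⟩
  let F : ∀ j, {a // Q j a} := fun j => Nat.rec ⟨a0, h0⟩ key j
  refine ⟨fun j => (F j).1, rfl, fun j => (F j).2, fun j => ?_⟩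
  have : F (j+1) = key j (F j) := rfl
  show R j (F j).1 (F (j+1)).1
  rw [this]
  show R j (F j).1 (hstep j (F j).1 (F j).2).choose
  exact (hstep j (F j).1 (F j).2).choose_spec.2

lemma infinite_of_forall_exists_gt {s : Set ℕ} (h : ∀ N : ℕ, ∃ p, N < p ∧ p ∈ s) :
    s.Infinite := by
  intro hfin
  obtain ⟨N, hN⟩ := hfin.toFinset.exists_le
  obtain ⟨p, hp1, hp2⟩ := h N
  exact absurd (hN p (hfin.mem_toFinset.2 hp2)) (by omega)

lemma sep_gt_infinite_s9 {s : Set ℕ} (hs : s.Infinite) (N : ℕ) :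
    {p ∈ s | N < p}.Infinite := by
  have : {p ∈ s | N < p} = s \ {p | p ≤ N} := by
    ext p
    simp only [Set.mem_sep_iff, Set.mem_diff, Set.mem_setOf_eq]
    exact ⟨fun ⟨h1, h2⟩ => ⟨h1, by omega⟩, fun ⟨h1, h2⟩ => ⟨h1, by omega⟩⟩
  rw [this]
  exact hs.diff ((Set.finite_Iic N).subset (by intro p; simp [Set.mem_Iic]))

/-- Multi-family splitting lemma: one can find a single index `n` and a smaller
infinite set on which all refined families are still good. -/
lemma multi {J : Type*} [Finite J] (A B : ι → ℕ → Prop) (S : J → Set ι)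
    (M : Set ℕ) (hM : M.Infinite) (hS : ∀ j, Good A B (S j) M) :
    ∃ n ∈ M, ∃ M', M' ⊆ M ∧ M'.Infinite ∧ (∀ p ∈ M', n < p) ∧
      ∀ j, Good A B {i ∈ S j | A i n} M' ∧ Good A B {i ∈ S j | B i n} M' := by
  by_contra hcon
  push_neg at hcon
  -- step existence
  have hstep : ∀ (k : ℕ) (Ms : Set ℕ), (Ms ⊆ M ∧ Ms.Infinite) →
      ∃ Ms', (Ms' ⊆ M ∧ Ms'.Infinite) ∧
        (Ms' ⊆ Ms ∧ (∀ p ∈ Ms', sInf Ms < p) ∧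
          ∃ j b, ∀ i ∈ S j, Osc A B i Ms' →
            ¬ (bif b then A i (sInf Ms) else B i (sInf Ms))) := by
    intro k Ms hQ
    obtain ⟨hMs, hMsInf⟩ := hQ
    set n := sInf Ms with hn
    have hne : Ms.Nonempty := hMsInf.nonempty
    have hnM : n ∈ Ms := Nat.sInf_mem hne
    set Mc := {p ∈ Ms | n < p} with hMc
    have hMcInf : Mc.Infinite := sep_gt_infinite_s9 hMsInf n
    have hMcM : Mc ⊆ M := fun p hp => hMs hp.1
    have hgt : ∀ p ∈ Mc, n < p := fun p hp => hp.2
    obtain ⟨j, hj⟩ := hcon n (hMs hnM) Mc hMcM hMcInf hgt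
    by_cases hGA : Good A B {i ∈ S j | A i n} Mc
    · have hGB := hj hGA
      rw [Good] at hGB
      push_neg at hGB
      obtain ⟨M'', hsub, hinf, hbad⟩ := hGB
      refine ⟨M'', ⟨(hsub.trans hMcM), hinf⟩, hsub.trans (fun p hp => hp.1),
        fun p hp => (hsub hp).2, j, false, ?_⟩
      intro i hi hosc
      simp only [cond_false]
      intro hBi
      exact hbad i ⟨hi, hBi⟩ hosc
    · rw [Good] at hGA
      push_neg at hGA
      obtain ⟨M'', hsub, hinf, hbad⟩ := hGA
      refine ⟨M'', ⟨(hsub.trans hMcM), hinf⟩, hsub.trans (fun p hp => hp.1),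
        fun p hp => (hsub hp).2, j, true, ?_⟩
      intro i hi hosc
      simp only [cond_true]
      intro hAi
      exact hbad i ⟨hi, hAi⟩ hosc
  obtain ⟨f, hf0, hfQ, hfR⟩ := nat_rec_chain (fun _ Ms => Ms ⊆ M ∧ Ms.Infinite)
    (fun _ Ms Ms' => Ms' ⊆ Ms ∧ (∀ p ∈ Ms', sInf Ms < p) ∧
      ∃ j b, ∀ i ∈ S j, Osc A B i Ms' →
        ¬ (bif b then A i (sInf Ms) else B i (sInf Ms)))
    M ⟨subset_rfl, hM⟩ hstep
  set nn : ℕ → ℕ := fun k => sInf (f k) with hnn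
  choose jf bf hkey using fun k => (hfR k).2.2
  -- basic facts
  have hmem : ∀ k, nn k ∈ f k := fun k => Nat.sInf_mem (hfQ k).2.nonempty
  have hsucc : ∀ k, f (k+1) ⊆ f k := fun k => (hfR k).1
  have hchain : ∀ k l, k ≤ l → f l ⊆ f k := by
    intro k l hkl
    induction l with
    | zero => have : k = 0 := by omega
              subst this; exact subset_rfl
    | succ l ih =>
        rcases Nat.lt_or_ge k (l+1) with hlt | hge
        · exact (hsucc l).trans (ih (by omega))
        · have : k = l + 1 := by omega
          subst this; exact subset_rfl
  have hmono : StrictMono nn := by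
    apply strictMono_nat_of_lt_succ
    intro k
    exact (hfR k).2.1 (nn (k+1)) (hmem (k+1))
  -- pigeonhole
  have hfin : Finite (J × Bool) := inferInstance
  obtain ⟨⟨js, bs⟩, hfib⟩ := Finite.exists_infinite_fiber (fun k => (jf k, bf k))
  have hK : ((fun k => (jf k, bf k)) ⁻¹' {(js, bs)}).Infinite :=
    Set.infinite_coe_iff.1 hfib
  set K := (fun k => (jf k, bf k)) ⁻¹' {(js, bs)} with hKdef
  have hKj : ∀ k ∈ K, jf k = js ∧ bf k = bs := by
    intro k hk
    have : (jf k, bf k) = (js, bs) := hk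
    exact ⟨congrArg Prod.fst this, congrArg Prod.snd this⟩
  set Mt := nn '' K with hMt
  have hMtInf : Mt.Infinite := hK.image (hmono.injective.injOn)
  have hMtM : Mt ⊆ M := by
    rintro p ⟨k, _, rfl⟩
    have := hchain 0 k (Nat.zero_le k) (hmem k)
    rwa [hf0] at this
  obtain ⟨i, hiS, hOsc⟩ := hS js Mt hMtM hMtInf
  -- key: for every k ∈ K, i oscillates on f (k+1)
  have hOk : ∀ k ∈ K, Osc A B i (f (k+1)) := by
    intro k hk
    constructor
    · apply Set.Infinite.mono ?_ (sep_gt_infinite_s9 hOsc.1 (nn k))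
      rintro p ⟨⟨⟨l, hlK, rfl⟩, hA⟩, hgt⟩
      have hlk : k < l := by
        by_contra hle
        exact absurd (hmono.le_iff_le.2 (by omega : l ≤ k)) (by omega)
      exact ⟨hchain (k+1) l (by omega) (hmem l), hA⟩
    · apply Set.Infinite.mono ?_ (sep_gt_infinite_s9 hOsc.2 (nn k))
      rintro p ⟨⟨⟨l, hlK, rfl⟩, hB⟩, hgt⟩
      have hlk : k < l := by
        by_contra hle
        exact absurd (hmono.le_iff_le.2 (by omega : l ≤ k)) (by omega)
      exact ⟨hchain (k+1) l (by omega) (hmem l), hB⟩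
  -- contradiction
  cases hbs : bs
  · -- bs = false : no B i (nn k) for k ∈ K, but B-side infinite on Mt
    obtain ⟨p, ⟨⟨k, hkK, rfl⟩, hBp⟩⟩ := hOsc.2.nonempty
    have h1 := hkey k i (by rw [(hKj k hkK).1]; exact hiS) (hOk k hkK)
    rw [(hKj k hkK).2, hbs] at h1
    simp only [cond_false] at h1
    exact h1 hBp
  · obtain ⟨p, ⟨⟨k, hkK, rfl⟩, hAp⟩⟩ := hOsc.1.nonempty
    have h1 := hkey k i (by rw [(hKj k hkK).1]; exact hiS) (hOk k hkK)
    rw [(hKj k hkK).2, hbs] at h1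
    simp only [cond_true] at h1
    exact h1 hAp
end Comb

section Indep
variable {ι : Type*}

def Kfam (A B : ι → ℕ → Prop) (S₀ : Set ι) (j : ℕ) (nv : ℕ → ℕ) (σ : ℕ → Bool) : Set ι :=
  {i ∈ S₀ | ∀ k, k < j → (σ k = true → A i (nv k)) ∧ (σ k = false → B i (nv k))}

lemma Kfam_congr (A B : ι → ℕ → Prop) (S₀ : Set ι) (j : ℕ) {nv nv' : ℕ → ℕ}
    {σ σ' : ℕ → Bool} (hnv : ∀ k, k < j → nv k = nv' k)
    (hσ : ∀ k, k < j → σ k = σ' k) :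
    Kfam A B S₀ j nv σ = Kfam A B S₀ j nv' σ' := by
  ext i
  simp only [Kfam, mem_sep_iff]
  constructor <;> rintro ⟨h1, h2⟩ <;> refine ⟨h1, fun k hk => ?_⟩
  · rw [← hnv k hk, ← hσ k hk]; exact h2 k hk
  · rw [hnv k hk, hσ k hk]; exact h2 k hk

lemma Kfam_zero (A B : ι → ℕ → Prop) (S₀ : Set ι) (nv : ℕ → ℕ) (σ : ℕ → Bool) :
    Kfam A B S₀ 0 nv σ = S₀ := by
  ext i
  simp [Kfam]

lemma Kfam_succ_true (A B : ι → ℕ → Prop) (S₀ : Set ι) (j : ℕ) (nv : ℕ → ℕ)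
    {σ : ℕ → Bool} (hσ : σ j = true) :
    Kfam A B S₀ (j+1) nv σ = {i ∈ Kfam A B S₀ j nv σ | A i (nv j)} := by
  ext i
  simp only [Kfam, mem_sep_iff]
  constructor
  · rintro ⟨h1, h2⟩
    exact ⟨⟨h1, fun k hk => h2 k (by omega)⟩, (h2 j (by omega)).1 hσ⟩
  · rintro ⟨⟨h1, h2⟩, hA⟩
    refine ⟨h1, fun k hk => ?_⟩
    rcases Nat.lt_or_ge k j with hlt | hge
    · exact h2 k hlt
    · have : k = j := by omega
      subst this
      exact ⟨fun _ => hA, fun hf => absurd hf (by simp [hσ])⟩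

lemma Kfam_succ_false (A B : ι → ℕ → Prop) (S₀ : Set ι) (j : ℕ) (nv : ℕ → ℕ)
    {σ : ℕ → Bool} (hσ : σ j = false) :
    Kfam A B S₀ (j+1) nv σ = {i ∈ Kfam A B S₀ j nv σ | B i (nv j)} := by
  ext i
  simp only [Kfam, mem_sep_iff]
  constructor
  · rintro ⟨h1, h2⟩
    exact ⟨⟨h1, fun k hk => h2 k (by omega)⟩, (h2 j (by omega)).2 hσ⟩
  · rintro ⟨⟨h1, h2⟩, hB⟩
    refine ⟨h1, fun k hk => ?_⟩
    rcases Nat.lt_or_ge k j with hlt | hge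
    · exact h2 k hlt
    · have : k = j := by omega
      subst this
      exact ⟨fun hf => absurd hf (by simp [hσ]), fun _ => hB⟩

/-- The independent-subsequence lemma: if the family `S₀` oscillates on every
infinite subset of `M₀`, then there is a strictly monotone sequence of indices
along which every finite `A`/`B`-pattern is realized by some member of `S₀`. -/
lemma indep (A B : ι → ℕ → Prop) (S₀ : Set ι) (M₀ : Set ℕ) (hM : M₀.Infinite)
    (hG : Good A B S₀ M₀) :
    ∃ n : ℕ → ℕ, StrictMono n ∧ ∀ (F : Finset ℕ) (σ : ℕ → Bool),
      ∃ i ∈ S₀, ∀ k ∈ F, (σ k = true → A i (n k)) ∧ (σ k = false → B i (n k)) := by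
  classical
  set Q : ℕ → (ℕ → ℕ) × Set ℕ → Prop := fun j s =>
    s.2.Infinite ∧ (∀ σ : ℕ → Bool, Good A B (Kfam A B S₀ j s.1 σ) s.2) ∧
      (∀ k, k < j → ∀ p ∈ s.2, s.1 k < p) ∧
      (∀ k l, k < l → l < j → s.1 k < s.1 l) with hQdef
  have h0 : Q 0 ((fun _ => 0), M₀) := by
    simp only [hQdef]
    refine ⟨hM, fun σ => ?_, by omega, by omega⟩
    rw [Kfam_zero]
    exact hG
  have hstep : ∀ j s, Q j s → ∃ s', Q (j+1) s' ∧ ∀ k, k < j → s'.1 k = s.1 k := by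
    simp only [hQdef]
    rintro j ⟨nv, Ms⟩ ⟨hInf, hGood, hgt, hmono⟩
    simp only at hInf hGood hgt hmono
    have hfinJ : Finite (Fin j → Bool) := inferInstance
    set Sfam : (Fin j → Bool) → Set ι := fun τ =>
      Kfam A B S₀ j nv (fun k => if h : k < j then τ ⟨k, h⟩ else false) with hSfam
    obtain ⟨n', hn'Ms, M', hM'Ms, hM'Inf, hM'gt, HH⟩ :=
      multi A B Sfam Ms hInf (fun τ => hGood _)
    set nv' := Function.update nv j n' with hnv'
    have hagree : ∀ k, k < j → nv' k = nv k := by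
      intro k hk
      simp [hnv', Function.update_of_ne (by omega : k ≠ j)]
    refine ⟨(nv', M'), ⟨hM'Inf, ?_, ?_, ?_⟩, hagree⟩
    · intro σ
      set τ : Fin j → Bool := fun k => σ k.1 with hτ
      have e1 : Kfam A B S₀ j nv' σ = Sfam τ := by
        apply Kfam_congr
        · exact fun k hk => hagree k hk
        · intro k hk
          simp [hτ, hk]
      have hnvj : nv' j = n' := Function.update_self j n' nv
      cases hσj : σ j
      · rw [Kfam_succ_false A B S₀ j nv' hσj, e1, hnvj]
        exact (HH τ).2
      · rw [Kfam_succ_true A B S₀ j nv' hσj, e1, hnvj]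
        exact (HH τ).1
    · intro k hk p hp
      show nv' k < p
      rcases Nat.lt_or_ge k j with hlt | hge
      · rw [hagree k hlt]
        exact hgt k hlt p (hM'Ms hp)
      · have : k = j := by omega
        subst this
        rw [hnv', Function.update_self]
        exact hM'gt p hp
    · intro k l hkl hlj
      show nv' k < nv' l
      rcases Nat.lt_or_ge l j with hlt | hge
      · rw [hagree k (by omega), hagree l hlt]
        exact hmono k l hkl hlt
      · have : l = j := by omega
        subst this
        rw [hagree k hkl, hnv', Function.update_self]
        exact hgt k hkl n' hn'Ms
  obtain ⟨f, hf0, hfQ, hfR⟩ := nat_rec_chain Q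
    (fun j s s' => ∀ k, k < j → s'.1 k = s.1 k) ((fun _ => 0), M₀) h0 hstep
  set n : ℕ → ℕ := fun k => (f (k+1)).1 k with hn
  have hstab : ∀ j k, k < j → (f j).1 k = n k := by
    intro j
    induction j with
    | zero => omega
    | succ j ih =>
        intro k hk
        rcases Nat.lt_or_ge k j with hlt | hge
        · rw [hfR j k hlt]
          exact ih k hlt
        · have : k = j := by omega
          subst this
          rfl
  have hmono : StrictMono n := by
    intro k l hkl
    have h1 := (hfQ (l+1)).2.2.2 k l hkl (by omega)
    rwa [hstab (l+1) k (by omega), hstab (l+1) l (by omega)] at h1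
  refine ⟨n, hmono, ?_⟩
  intro F σ
  set j := F.sup id + 1 with hj
  have hkj : ∀ k ∈ F, k < j := by
    intro k hk
    have := Finset.le_sup (f := id) hk
    simp only [id] at this
    omega
  obtain ⟨i, hi, _⟩ := (hfQ j).2.1 σ (f j).2 subset_rfl (hfQ j).1
  obtain ⟨hiS, hcons⟩ := hi
  refine ⟨i, hiS, fun k hk => ?_⟩
  have := hcons k (hkj k hk)
  rwa [hstab j k (hkj k hk)] at this
end Indep

section Analysis

open Metric Filter Topology

lemma Osc.mono' {ι : Type*} {A B : ι → ℕ → Prop} {i : ι} {M M' : Set ℕ}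
    (h : Osc A B i M) (hMM : M ⊆ M') : Osc A B i M' := by
  constructor
  · exact h.1.mono (fun p hp => ⟨hMM hp.1, hp.2⟩)
  · exact h.2.mono (fun p hp => ⟨hMM hp.1, hp.2⟩)

lemma exists_strictMono_mem {M : Set ℕ} (hM : M.Infinite) :
    ∃ m : ℕ → ℕ, StrictMono m ∧ ∀ t, m t ∈ M := by
  obtain ⟨f, _, hfQ, hfR⟩ := nat_rec_chain (fun _ p => p ∈ M) (fun _ p p' => p < p')
    (sInf M) (Nat.sInf_mem hM.nonempty)
    (fun j p _ => by
      obtain ⟨p', hp'⟩ := (sep_gt_infinite_s9 hM p).nonempty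
      exact ⟨p', hp'.1, hp'.2⟩)
  exact ⟨f, strictMono_nat_of_lt_succ hfR, hfQ⟩

lemma listStep {ι : Type*} (S₀ : Set ι) (L : List ((ι → ℕ → Prop) × (ι → ℕ → Prop)))
    (M : Set ℕ) (hM : M.Infinite) :
    (∃ p ∈ L, ∃ M', M' ⊆ M ∧ M'.Infinite ∧ Good p.1 p.2 S₀ M') ∨
    (∃ M', M' ⊆ M ∧ M'.Infinite ∧ ∀ p ∈ L, ∀ i ∈ S₀, ¬ Osc p.1 p.2 i M') := by
  induction L generalizing M with
  | nil => exact Or.inr ⟨M, subset_rfl, hM, by simp⟩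
  | cons q L ih =>
    by_cases hq : Good q.1 q.2 S₀ M
    · exact Or.inl ⟨q, by simp, M, subset_rfl, hM, hq⟩
    · rw [Good] at hq
      push_neg at hq
      obtain ⟨M', hsub, hinf, hbad⟩ := hq
      rcases ih M' hinf with ⟨p, hpL, M'', h1, h2, h3⟩ | ⟨M'', h1, h2, h3⟩
      · exact Or.inl ⟨p, by simp [hpL], M'', h1.trans hsub, h2, h3⟩
      · refine Or.inr ⟨M'', h1.trans hsub, h2, ?_⟩
        intro p hp i hi hosc
        rcases List.mem_cons.1 hp with rfl | hpL
        · exact hbad i hi (hosc.mono' h1)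
        · exact h3 p hpL i hi hosc

variable {X : Type*} [NormedAddCommGroup X] [NormedSpace ℂ X]

lemma clusterPair (x : ℕ → X) (C : ℝ) (hC : ∀ n, ‖x n‖ ≤ C) (ε : ℝ)
    (hosc : ∀ m : ℕ → ℕ, StrictMono m → ∃ φ : X →L[ℂ] ℂ, ‖φ‖ ≤ 1 ∧
      ∀ n₀ : ℕ, ∃ n ≥ n₀, ∃ k ≥ n₀, ε ≤ ‖φ (x (m n)) - φ (x (m k))‖)
    {M : Set ℕ} (hM : M.Infinite) :
    ∃ φ : X →L[ℂ] ℂ, ‖φ‖ ≤ 1 ∧ ∃ a b : ℂ, ‖a‖ ≤ C ∧ ‖b‖ ≤ C ∧ ε ≤ ‖a - b‖ ∧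
      ∀ η > 0, {n ∈ M | ‖φ (x n) - a‖ < η}.Infinite ∧
        {n ∈ M | ‖φ (x n) - b‖ < η}.Infinite := by
  obtain ⟨m, hm, hmM⟩ := exists_strictMono_mem hM
  obtain ⟨φ, hφ1, hφ2⟩ := hosc m hm
  choose nf hnf kf hkf hsep using hφ2
  have hval : ∀ j : ℕ, ‖φ (x j)‖ ≤ C := by
    intro j
    calc ‖φ (x j)‖ ≤ ‖φ‖ * ‖x j‖ := φ.le_opNorm _
    _ ≤ 1 * C := by
        apply mul_le_mul hφ1 (hC j) (norm_nonneg _)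
        exact zero_le_one
    _ = C := one_mul C
  set u : ℕ → ℂ := fun t => φ (x (m (nf t))) with hu
  set v : ℕ → ℂ := fun t => φ (x (m (kf t))) with hv
  have hub : ∀ t, u t ∈ closedBall (0 : ℂ) C := by
    intro t
    rw [mem_closedBall_zero_iff]
    exact hval _
  have hvb : ∀ t, v t ∈ closedBall (0 : ℂ) C := by
    intro t
    rw [mem_closedBall_zero_iff]
    exact hval _
  obtain ⟨a, hac, g1, hg1m, hg1⟩ :=
    tendsto_subseq_of_bounded (isBounded_closedBall (x := (0:ℂ)) (r := C)) hub
  obtain ⟨b, hbc, g2, hg2m, hg2⟩ :=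
    tendsto_subseq_of_bounded (isBounded_closedBall (x := (0:ℂ)) (r := C))
    (fun t => hvb (g1 t))
  rw [isClosed_closedBall.closure_eq, mem_closedBall_zero_iff] at hac hbc
  set g : ℕ → ℕ := g1 ∘ g2 with hg
  have hgm : StrictMono g := hg1m.comp hg2m
  have hga : Tendsto (u ∘ g) atTop (𝓝 a) := by
    have := hg1.comp hg2m.tendsto_atTop
    exact this
  have hgb : Tendsto (v ∘ g) atTop (𝓝 b) := hg2
  have hab : ε ≤ ‖a - b‖ := by
    have hlim : Tendsto (fun t => ‖u (g t) - v (g t)‖) atTop (𝓝 ‖a - b‖) :=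
      ((hga.sub hgb).norm)
    apply ge_of_tendsto hlim
    filter_upwards with t
    exact hsep (g t)
  refine ⟨φ, hφ1, a, b, hac, hbc, hab, ?_⟩
  intro η hη
  have hgle : ∀ t : ℕ, t ≤ g t := fun t => hgm.le_apply
  constructor
  · rw [Metric.tendsto_atTop] at hga
    obtain ⟨T, hT⟩ := hga η hη
    apply _root_.infinite_of_forall_exists_gt
    intro N
    set t := max T (N + 1) with ht
    refine ⟨m (nf (g t)), ?_, hmM _, ?_⟩
    · have h1 : nf (g t) ≤ m (nf (g t)) := hm.le_apply
      have h2 : g t ≤ nf (g t) := hnf (g t)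
      have h3 : t ≤ g t := hgle t
      omega
    · have := hT t (le_max_left _ _)
      rw [dist_eq_norm] at this
      exact this
  · rw [Metric.tendsto_atTop] at hgb
    obtain ⟨T, hT⟩ := hgb η hη
    apply _root_.infinite_of_forall_exists_gt
    intro N
    set t := max T (N + 1) with ht
    refine ⟨m (kf (g t)), ?_, hmM _, ?_⟩
    · have h1 : kf (g t) ≤ m (kf (g t)) := hm.le_apply
      have h2 : g t ≤ kf (g t) := hkf (g t)
      have h3 : t ≤ g t := hgle t
      omega
    · have := hT t (le_max_left _ _)
      rw [dist_eq_norm] at this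
      exact this

end Analysis


section Grid

lemma grid_round (C' η : ℝ) (hη : 0 < η) :
    ∃ G : Finset ℂ, ∀ z : ℂ, ‖z‖ ≤ C' → ∃ g ∈ G, ‖g - z‖ ≤ η / 2 := by
  set β := η / 4 with hβ
  have hβpos : 0 < β := by positivity
  set N : ℤ := ⌈C' / β⌉ with hN
  refine ⟨(Finset.Icc (-N) N ×ˢ Finset.Icc (-N) N).image
    (fun p => Complex.mk (β * p.1) (β * p.2)), ?_⟩
  intro z hz
  have hre : |z.re| ≤ C' := (Complex.abs_re_le_norm z).trans hz
  have him : |z.im| ≤ C' := (Complex.abs_im_le_norm z).trans hz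
  have hkbound : ∀ r : ℝ, |r| ≤ C' → -N ≤ ⌊r / β⌋ ∧ ⌊r / β⌋ ≤ N := by
    intro r hr
    rw [abs_le] at hr
    constructor
    · rw [hN, ← Int.floor_neg]
      apply Int.floor_le_floor
      rw [← neg_div]
      exact (div_le_div_iff_of_pos_right hβpos).2 hr.1
    · calc ⌊r / β⌋ ≤ ⌈r / β⌉ := Int.floor_le_ceil _
        _ ≤ N := Int.ceil_le_ceil ((div_le_div_iff_of_pos_right hβpos).2 hr.2)
  have happrox : ∀ r : ℝ, |β * ⌊r / β⌋ - r| ≤ β := by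
    intro r
    have h1 : (⌊r / β⌋ : ℝ) ≤ r / β := Int.floor_le _
    have h2 : r / β < ⌊r / β⌋ + 1 := Int.lt_floor_add_one _
    rw [abs_le]
    constructor
    · nlinarith [(div_le_iff₀ hβpos).1 (le_of_lt h2)]
    · nlinarith [(le_div_iff₀ hβpos).1 h1]
  set k1 : ℤ := ⌊z.re / β⌋ with hk1
  set k2 : ℤ := ⌊z.im / β⌋ with hk2
  refine ⟨Complex.mk (β * k1) (β * k2), ?_, ?_⟩
  · rw [Finset.mem_image]
    refine ⟨(k1, k2), ?_, rfl⟩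
    rw [Finset.mem_product, Finset.mem_Icc, Finset.mem_Icc]
    exact ⟨⟨(hkbound z.re hre).1, (hkbound z.re hre).2⟩,
      ⟨(hkbound z.im him).1, (hkbound z.im him).2⟩⟩
  · have h1 : |β * (k1:ℝ) - z.re| ≤ β := happrox z.re
    have h2 : |β * (k2:ℝ) - z.im| ≤ β := happrox z.im
    calc ‖Complex.mk (β * k1) (β * k2) - z‖
        ≤ |(Complex.mk (β * k1) (β * k2) - z).re| + |(Complex.mk (β * k1) (β * k2) - z).im| := by
          exact Complex.norm_le_abs_re_add_abs_im _
      _ = |β * (k1:ℝ) - z.re| + |β * (k2:ℝ) - z.im| := by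
          simp [Complex.sub_re, Complex.sub_im]
      _ ≤ β + β := add_le_add h1 h2
      _ = η / 2 := by rw [hβ]; ring

end Grid

section FixedPair

variable {X : Type*} [NormedAddCommGroup X] [NormedSpace ℂ X]

lemma fixedPair (x : ℕ → X) (C : ℝ) (hC : ∀ n, ‖x n‖ ≤ C) (ε : ℝ)
    (hosc : ∀ m : ℕ → ℕ, StrictMono m → ∃ φ : X →L[ℂ] ℂ, ‖φ‖ ≤ 1 ∧
      ∀ n₀ : ℕ, ∃ n ≥ n₀, ∃ k ≥ n₀, ε ≤ ‖φ (x (m n)) - φ (x (m k))‖)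
    (η : ℝ) (hη : 0 < η) :
    ∃ a b : ℂ, ε - η ≤ ‖a - b‖ ∧ ∃ M : Set ℕ, M.Infinite ∧
      Good (fun (φ : X →L[ℂ] ℂ) n => ‖φ (x n) - a‖ < η)
        (fun (φ : X →L[ℂ] ℂ) n => ‖φ (x n) - b‖ < η) {φ | ‖φ‖ ≤ 1} M := by
  obtain ⟨G, hG⟩ := grid_round C η hη
  set T := (G ×ˢ G).filter (fun p => ε - η ≤ ‖p.1 - p.2‖) with hT
  set L := T.toList.map (fun ab =>
    ((fun (φ : X →L[ℂ] ℂ) n => ‖φ (x n) - ab.1‖ < η),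
     (fun (φ : X →L[ℂ] ℂ) n => ‖φ (x n) - ab.2‖ < η))) with hL
  rcases listStep {φ : X →L[ℂ] ℂ | ‖φ‖ ≤ 1} L Set.univ Set.infinite_univ with
    ⟨p, hpL, M', _, hinf, hgood⟩ | ⟨M', _, hinf, hbad⟩
  · rw [hL, List.mem_map] at hpL
    obtain ⟨ab, habL, rfl⟩ := hpL
    have habT : ab ∈ T := Finset.mem_toList.1 habL
    rw [hT, Finset.mem_filter] at habT
    exact ⟨ab.1, ab.2, habT.2, M', hinf, hgood⟩
  · exfalso
    obtain ⟨φ, hφ, a₀, b₀, ha₀, hb₀, hapart, hclus⟩ := clusterPair x C hC ε hosc hinf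
    obtain ⟨ga, hgaG, hga⟩ := hG a₀ ha₀
    obtain ⟨gb, hgbG, hgb⟩ := hG b₀ hb₀
    have habT : (ga, gb) ∈ T := by
      rw [hT, Finset.mem_filter, Finset.mem_product]
      refine ⟨⟨hgaG, hgbG⟩, ?_⟩
      have : a₀ - b₀ = (ga - gb) - (ga - a₀) + (gb - b₀) := by ring
      have h1 : ‖a₀ - b₀‖ ≤ ‖ga - gb‖ + ‖ga - a₀‖ + ‖gb - b₀‖ := by
        rw [this]
        calc ‖ga - gb - (ga - a₀) + (gb - b₀)‖ ≤ ‖ga - gb - (ga - a₀)‖ + ‖gb - b₀‖ :=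
              norm_add_le _ _
          _ ≤ ‖ga - gb‖ + ‖ga - a₀‖ + ‖gb - b₀‖ := by
              have := norm_sub_le (ga - gb) (ga - a₀)
              linarith
      simp only []
      linarith
    have hpL : ((fun (φ : X →L[ℂ] ℂ) n => ‖φ (x n) - ga‖ < η),
        (fun (φ : X →L[ℂ] ℂ) n => ‖φ (x n) - gb‖ < η)) ∈ L := by
      rw [hL, List.mem_map]
      exact ⟨(ga, gb), Finset.mem_toList.2 habT, rfl⟩
    apply hbad _ hpL φ hφ
    constructor
    · apply Set.Infinite.mono ?_ (hclus (η/2) (by positivity)).1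
      rintro n ⟨hnM, hn⟩
      refine ⟨hnM, ?_⟩
      show ‖φ (x n) - ga‖ < η
      have heq : φ (x n) - ga = (φ (x n) - a₀) - (ga - a₀) := by ring
      rw [heq]
      calc ‖(φ (x n) - a₀) - (ga - a₀)‖ ≤ ‖φ (x n) - a₀‖ + ‖ga - a₀‖ := norm_sub_le _ _
        _ < η / 2 + η / 2 := add_lt_add_of_lt_of_le hn hga
        _ = η := by ring
    · apply Set.Infinite.mono ?_ (hclus (η/2) (by positivity)).2
      rintro n ⟨hnM, hn⟩
      refine ⟨hnM, ?_⟩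
      show ‖φ (x n) - gb‖ < η
      have heq : φ (x n) - gb = (φ (x n) - b₀) - (gb - b₀) := by ring
      rw [heq]
      calc ‖(φ (x n) - b₀) - (gb - b₀)‖ ≤ ‖φ (x n) - b₀‖ + ‖gb - b₀‖ := norm_sub_le _ _
        _ < η / 2 + η / 2 := add_lt_add_of_lt_of_le hn hgb
        _ = η := by ring

end FixedPair

set_option maxHeartbeats 1000000 in
/-- Quantitative version (Behrends): if a bounded sequence (x_n) in a complex
Banach space has no ε-weak Cauchy subsequence, then for every δ > 0 there are a
subsequence (x_{m_n}) and k ≥ 2 such that (x_{m_n})_{n≥k} dominates the ℓ¹-basis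
with constant ε√2/8 − δ. -/
theorem quantitative_l1 (X : Type*) [NormedAddCommGroup X] [NormedSpace ℂ X]
    [CompleteSpace X] (x : ℕ → X) (hx : ∃ C : ℝ, ∀ n, ‖x n‖ ≤ C)
    (ε : ℝ) (hε : 0 < ε)
    (h : ¬ ∃ m : ℕ → ℕ, StrictMono m ∧
      ∀ φ : X →L[ℂ] ℂ, ‖φ‖ ≤ 1 →
        ∃ n₀ : ℕ, ∀ n ≥ n₀, ∀ k ≥ n₀, ‖φ (x (m n)) - φ (x (m k))‖ < ε) :
    ∀ δ : ℝ, 0 < δ → ∃ m : ℕ → ℕ, StrictMono m ∧ ∃ k : ℕ, 2 ≤ k ∧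
      ∀ lam : ℕ →₀ ℂ, (∀ n ∈ lam.support, k ≤ n) →
        ‖∑ n ∈ lam.support, lam n • x (m n)‖ ≥
          (ε * Real.sqrt 2 / 8 - δ) * ∑ n ∈ lam.support, ‖lam n‖ := by
  push_neg at h
  obtain ⟨C0, hC0⟩ := hx
  set C := max C0 0 with hCdef
  have hC : ∀ n, ‖x n‖ ≤ C := fun n => (hC0 n).trans (le_max_left _ _)
  intro δ hδ
  set η := 4 * δ / 5 with hηdef
  have hη : 0 < η := by positivity
  obtain ⟨a, b, hab, M, hMinf, hGood⟩ := fixedPair x C hC ε h η hη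
  obtain ⟨ms, hmsmono, hreal⟩ := indep
    (fun (φ : X →L[ℂ] ℂ) n => ‖φ (x n) - a‖ < η)
    (fun (φ : X →L[ℂ] ℂ) n => ‖φ (x n) - b‖ < η)
    {φ : X →L[ℂ] ℂ | ‖φ‖ ≤ 1} M hMinf hGood
  refine ⟨ms, hmsmono, 2, le_refl 2, ?_⟩
  intro lam _
  set F := lam.support with hF
  set S := ∑ k ∈ F, ‖lam k‖ with hSdef
  have hS0 : 0 ≤ S := Finset.sum_nonneg (fun k _ => norm_nonneg _)
  set V := ∑ k ∈ F, lam k • x (ms k) with hV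
  set d := (a - b) / 2 with hd
  have hdnorm : (ε - η) / 2 ≤ ‖d‖ := by
    have h2 : ‖d‖ = ‖a - b‖ / 2 := by
      rw [hd, norm_div]
      norm_num
    rw [h2]
    linarith
  have hkey : ∀ σ : ℕ → Bool,
      ‖d‖ * ‖∑ k ∈ F, lam k * (cond (σ k) (1:ℂ) (-1))‖ ≤ ‖V‖ + η * S := by
    intro σ
    obtain ⟨φ₁, hφ₁, hc₁⟩ := hreal F σ
    obtain ⟨φ₂, hφ₂, hc₂⟩ := hreal F (fun k => !σ k)
    have hφ₁' : ‖φ₁‖ ≤ 1 := hφ₁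
    have hφ₂' : ‖φ₂‖ ≤ 1 := hφ₂
    set θ : X →L[ℂ] ℂ := (2⁻¹ : ℂ) • (φ₁ - φ₂) with hθ
    have hθapp : ∀ v : X, θ v = (2⁻¹ : ℂ) * (φ₁ v - φ₂ v) := by
      intro v
      rw [hθ]
      simp [ContinuousLinearMap.smul_apply, ContinuousLinearMap.sub_apply, smul_eq_mul]
    have hhalf : ‖(2⁻¹ : ℂ)‖ = 2⁻¹ := by
      rw [norm_inv]
      norm_num
    have hpt : ∀ k ∈ F, ‖θ (x (ms k)) - (cond (σ k) (1:ℂ) (-1)) * d‖ ≤ η := by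
      intro k hk
      cases hσk : σ k
      · have h1 : ‖φ₁ (x (ms k)) - b‖ < η := (hc₁ k hk).2 hσk
        have h2 : ‖φ₂ (x (ms k)) - a‖ < η := (hc₂ k hk).1 (by simp [hσk])
        have heq : θ (x (ms k)) - (cond false (1:ℂ) (-1)) * d
            = (2⁻¹ : ℂ) * ((φ₁ (x (ms k)) - b) - (φ₂ (x (ms k)) - a)) := by
          rw [hθapp, hd]
          simp only [cond_false]
          ring
        rw [heq, norm_mul, hhalf]
        have h3 : ‖(φ₁ (x (ms k)) - b) - (φ₂ (x (ms k)) - a)‖ ≤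
            ‖φ₁ (x (ms k)) - b‖ + ‖φ₂ (x (ms k)) - a‖ := norm_sub_le _ _
        nlinarith
      · have h1 : ‖φ₁ (x (ms k)) - a‖ < η := (hc₁ k hk).1 hσk
        have h2 : ‖φ₂ (x (ms k)) - b‖ < η := (hc₂ k hk).2 (by simp [hσk])
        have heq : θ (x (ms k)) - (cond true (1:ℂ) (-1)) * d
            = (2⁻¹ : ℂ) * ((φ₁ (x (ms k)) - a) - (φ₂ (x (ms k)) - b)) := by
          rw [hθapp, hd]
          simp only [cond_true]
          ring
        rw [heq, norm_mul, hhalf]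
        have h3 : ‖(φ₁ (x (ms k)) - a) - (φ₂ (x (ms k)) - b)‖ ≤
            ‖φ₁ (x (ms k)) - a‖ + ‖φ₂ (x (ms k)) - b‖ := norm_sub_le _ _
        nlinarith
    have hθV : θ V = ∑ k ∈ F, lam k * θ (x (ms k)) := by
      rw [hV, map_sum]
      exact Finset.sum_congr rfl (fun k _ => by rw [map_smul, smul_eq_mul])
    have hiden : (∑ k ∈ F, lam k * (cond (σ k) (1:ℂ) (-1))) * d
        = θ V - ∑ k ∈ F, lam k * (θ (x (ms k)) - (cond (σ k) (1:ℂ) (-1)) * d) := by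
      rw [hθV, ← Finset.sum_sub_distrib, Finset.sum_mul]
      exact Finset.sum_congr rfl (fun k _ => by ring)
    have hθVle : ‖θ V‖ ≤ ‖V‖ := by
      rw [hθapp, norm_mul, hhalf]
      have h1 : ‖φ₁ V‖ ≤ ‖V‖ := by
        calc ‖φ₁ V‖ ≤ ‖φ₁‖ * ‖V‖ := φ₁.le_opNorm V
          _ ≤ 1 * ‖V‖ := mul_le_mul_of_nonneg_right hφ₁' (norm_nonneg _)
          _ = ‖V‖ := one_mul _
      have h2 : ‖φ₂ V‖ ≤ ‖V‖ := by
        calc ‖φ₂ V‖ ≤ ‖φ₂‖ * ‖V‖ := φ₂.le_opNorm V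
          _ ≤ 1 * ‖V‖ := mul_le_mul_of_nonneg_right hφ₂' (norm_nonneg _)
          _ = ‖V‖ := one_mul _
      have h3 : ‖φ₁ V - φ₂ V‖ ≤ ‖φ₁ V‖ + ‖φ₂ V‖ := norm_sub_le _ _
      nlinarith [norm_nonneg V]
    have hsum : ‖∑ k ∈ F, lam k * (θ (x (ms k)) - (cond (σ k) (1:ℂ) (-1)) * d)‖
        ≤ η * S := by
      calc ‖∑ k ∈ F, lam k * (θ (x (ms k)) - (cond (σ k) (1:ℂ) (-1)) * d)‖
          ≤ ∑ k ∈ F, ‖lam k * (θ (x (ms k)) - (cond (σ k) (1:ℂ) (-1)) * d)‖ :=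
            norm_sum_le _ _
        _ ≤ ∑ k ∈ F, ‖lam k‖ * η := by
            apply Finset.sum_le_sum
            intro k hk
            rw [norm_mul]
            exact mul_le_mul_of_nonneg_left (hpt k hk) (norm_nonneg _)
        _ = η * S := by rw [hSdef, ← Finset.sum_mul, mul_comm]
    calc ‖d‖ * ‖∑ k ∈ F, lam k * (cond (σ k) (1:ℂ) (-1))‖
        = ‖(∑ k ∈ F, lam k * (cond (σ k) (1:ℂ) (-1))) * d‖ := by
          rw [norm_mul, mul_comm]
      _ = ‖θ V - ∑ k ∈ F, lam k * (θ (x (ms k)) - (cond (σ k) (1:ℂ) (-1)) * d)‖ := by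
          rw [hiden]
      _ ≤ ‖θ V‖ + ‖∑ k ∈ F, lam k * (θ (x (ms k)) - (cond (σ k) (1:ℂ) (-1)) * d)‖ :=
          norm_sub_le _ _
      _ ≤ ‖V‖ + η * S := add_le_add hθVle hsum
  -- real-part and imaginary-part lower bounds
  have hre : ∑ k ∈ F, |(lam k).re| ≤
      ‖∑ k ∈ F, lam k * (cond (decide (0 ≤ (lam k).re)) (1:ℂ) (-1))‖ := by
    have h1 : (∑ k ∈ F, lam k * (cond (decide (0 ≤ (lam k).re)) (1:ℂ) (-1))).re
        = ∑ k ∈ F, |(lam k).re| := by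
      rw [Complex.re_sum]
      apply Finset.sum_congr rfl
      intro k _
      by_cases hk : 0 ≤ (lam k).re
      · simp [hk, abs_of_nonneg hk]
      · simp [hk, abs_of_neg (lt_of_not_ge hk)]
    calc ∑ k ∈ F, |(lam k).re|
        = (∑ k ∈ F, lam k * (cond (decide (0 ≤ (lam k).re)) (1:ℂ) (-1))).re := h1.symm
      _ ≤ |(∑ k ∈ F, lam k * (cond (decide (0 ≤ (lam k).re)) (1:ℂ) (-1))).re| :=
          le_abs_self _
      _ ≤ ‖∑ k ∈ F, lam k * (cond (decide (0 ≤ (lam k).re)) (1:ℂ) (-1))‖ := by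
          exact Complex.abs_re_le_norm _
  have him : ∑ k ∈ F, |(lam k).im| ≤
      ‖∑ k ∈ F, lam k * (cond (decide (0 ≤ (lam k).im)) (1:ℂ) (-1))‖ := by
    have h1 : (∑ k ∈ F, lam k * (cond (decide (0 ≤ (lam k).im)) (1:ℂ) (-1))).im
        = ∑ k ∈ F, |(lam k).im| := by
      rw [Complex.im_sum]
      apply Finset.sum_congr rfl
      intro k _
      by_cases hk : 0 ≤ (lam k).im
      · simp [hk, abs_of_nonneg hk]
      · simp [hk, abs_of_neg (lt_of_not_ge hk)]
    calc ∑ k ∈ F, |(lam k).im|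
        = (∑ k ∈ F, lam k * (cond (decide (0 ≤ (lam k).im)) (1:ℂ) (-1))).im := h1.symm
      _ ≤ |(∑ k ∈ F, lam k * (cond (decide (0 ≤ (lam k).im)) (1:ℂ) (-1))).im| :=
          le_abs_self _
      _ ≤ ‖∑ k ∈ F, lam k * (cond (decide (0 ≤ (lam k).im)) (1:ℂ) (-1))‖ := by
          exact Complex.abs_im_le_norm _
  have k1 := hkey (fun k => decide (0 ≤ (lam k).re))
  have k2 := hkey (fun k => decide (0 ≤ (lam k).im))
  have hd0 : 0 ≤ ‖d‖ := norm_nonneg _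
  have kk1 : ‖d‖ * ∑ k ∈ F, |(lam k).re| ≤ ‖V‖ + η * S :=
    (mul_le_mul_of_nonneg_left hre hd0).trans k1
  have kk2 : ‖d‖ * ∑ k ∈ F, |(lam k).im| ≤ ‖V‖ + η * S :=
    (mul_le_mul_of_nonneg_left him hd0).trans k2
  have hS2 : S ≤ ∑ k ∈ F, |(lam k).re| + ∑ k ∈ F, |(lam k).im| := by
    rw [hSdef, ← Finset.sum_add_distrib]
    apply Finset.sum_le_sum
    intro k _
    exact Complex.norm_le_abs_re_add_abs_im _
  have habs_nonneg1 : 0 ≤ ∑ k ∈ F, |(lam k).re| :=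
    Finset.sum_nonneg (fun k _ => abs_nonneg _)
  have habs_nonneg2 : 0 ≤ ∑ k ∈ F, |(lam k).im| :=
    Finset.sum_nonneg (fun k _ => abs_nonneg _)
  have hVge : (ε / 4 - δ) * S ≤ ‖V‖ := by
    have hdS : (ε - η) / 2 * S ≤ ‖d‖ * S := mul_le_mul_of_nonneg_right hdnorm hS0
    have hdS2 : ‖d‖ * S ≤ ‖d‖ * (∑ k ∈ F, |(lam k).re| + ∑ k ∈ F, |(lam k).im|) :=
      mul_le_mul_of_nonneg_left hS2 hd0
    have h2V : ‖d‖ * (∑ k ∈ F, |(lam k).re| + ∑ k ∈ F, |(lam k).im|)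
        ≤ 2 * ‖V‖ + 2 * (η * S) := by
      rw [mul_add]
      linarith
    have e1 : (ε - η) / 2 * S ≤ 2 * ‖V‖ + 2 * (η * S) := by linarith
    have e3 : (ε / 4 - δ) * S = ((ε - η) / 2 * S - 2 * (η * S)) / 2 := by
      rw [hηdef]
      ring
    rw [e3]
    linarith
  have hsqrt2 : Real.sqrt 2 ≤ 2 := by
    nlinarith [Real.sq_sqrt (by norm_num : (0:ℝ) ≤ 2), Real.sqrt_nonneg 2]
  have hconst : ε * Real.sqrt 2 / 8 - δ ≤ ε / 4 - δ := by
    have : ε * Real.sqrt 2 ≤ ε * 2 := mul_le_mul_of_nonneg_left hsqrt2 hε.le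
    linarith
  calc (ε * Real.sqrt 2 / 8 - δ) * S ≤ (ε / 4 - δ) * S :=
        mul_le_mul_of_nonneg_right hconst hS0
    _ ≤ ‖V‖ := hVge
end
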